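/- arXiv:2105.11996 — 9 statements merged into one kernel-verified Lean document; each statement's English description precedes it below -/
import Mathlib

section
/- There is a constant C such that for every n ≥ 1 and every subset A of the Boolean cube {0,1}^n, there exist a dimension m, a bounded set Q ⊆ ℝ^m that is cut out by at most C · 2^⌈n/2⌉ closed halfspaces, and an affine map π : ℝ^m → ℝ^n such that π(Q) ⊆ [0,1]^n and π(Q) ∩ {0,1}^n = A. -/
/-- The Boolean cube `{0,1}^n` inside `ℝ^n`. -/
def booleanCube (n : ℕ) : Set (Fin n → ℝ) := {x | ∀ i, x i = 0 ∨ x i = 1}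

/-- `Q ⊆ ℝ^m` is cut out by `k` closed halfspaces. -/
def CutOutBy {m : ℕ} (Q : Set (Fin m → ℝ)) (k : ℕ) : Prop :=
  ∃ (a : Fin k → Fin m → ℝ) (b : Fin k → ℝ),
    Q = {y | ∀ i, ∑ j, a i j * y j ≤ b i}

namespace SepAux
def bit (b : Bool) : ℝ := cond b 1 0
lemma bit_nonneg (b : Bool) : 0 ≤ bit b := by cases b <;> simp [bit]
lemma bit_le_one (b : Bool) : bit b ≤ 1 := by cases b <;> simp [bit]
variable (n1 n2 : ℕ)
abbrev S := Fin n1 → Bool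
abbrev T := Fin n2 → Bool
abbrev I := S n1 ⊕ T n2
abbrev K := I n1 n2 ⊕ (S n1 ⊕ (Bool × Bool))

noncomputable def coeff (i : Fin (n1 + n2)) : I n1 n2 → ℝ
  | .inl c => if h : (i : ℕ) < n1 then bit (c ⟨i, h⟩) else 0
  | .inr d => if h : (i : ℕ) < n1 then 0 else bit (d ⟨(i : ℕ) - n1, by have := i.isLt; omega⟩)

noncomputable def proj : (I n1 n2 → ℝ) →ₗ[ℝ] (Fin (n1 + n2) → ℝ) where
  toFun := fun w i => ∑ j, coeff n1 n2 i j * w j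
  map_add' := fun v w => by
    funext i; simp [mul_add, Finset.sum_add_distrib]
  map_smul' := fun r w => by
    funext i; simp only [RingHom.id_apply, Pi.smul_apply, smul_eq_mul, Finset.mul_sum, mul_left_comm]

lemma proj_apply_left (w : I n1 n2 → ℝ) (i1 : Fin n1) :
    proj n1 n2 w ⟨i1, by omega⟩ = ∑ c, bit (c i1) * w (.inl c) := by
  show ∑ j, coeff n1 n2 ⟨i1, by omega⟩ j * w j = _
  rw [Fintype.sum_sum_type]
  have h1 : ∀ c : S n1, coeff n1 n2 ⟨i1, by omega⟩ (.inl c) = bit (c i1) := by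
    intro c; simp only [coeff]; rw [dif_pos i1.isLt]
  have h2 : ∀ d : T n2, coeff n1 n2 ⟨i1, by omega⟩ (.inr d) = 0 := by
    intro d; simp only [coeff]; rw [dif_pos i1.isLt]
  simp only [h1, h2, zero_mul, Finset.sum_const_zero, add_zero]

lemma proj_apply_right (w : I n1 n2 → ℝ) (i2 : Fin n2) :
    proj n1 n2 w ⟨n1 + i2, by omega⟩ = ∑ d, bit (d i2) * w (.inr d) := by
  show ∑ j, coeff n1 n2 ⟨n1 + i2, by omega⟩ j * w j = _
  rw [Fintype.sum_sum_type]
  have hlt : ¬ ((n1 : ℕ) + (i2 : ℕ) < n1) := by omega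
  have h1 : ∀ c : S n1, coeff n1 n2 ⟨n1 + i2, by omega⟩ (.inl c) = 0 := by
    intro c; simp only [coeff]; rw [dif_neg hlt]
  have h2 : ∀ d : T n2, coeff n1 n2 ⟨n1 + i2, by omega⟩ (.inr d) = bit (d i2) := by
    intro d; simp only [coeff]; rw [dif_neg hlt]
    have e : n1 + (i2 : ℕ) - n1 = (i2 : ℕ) := by omega
    simp only [e, Fin.eta]
  simp only [h1, h2, zero_mul, Finset.sum_const_zero, zero_add]

noncomputable def patL (x : Fin (n1 + n2) → ℝ) : S n1 := fun i1 =>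
  @decide (x ⟨i1, by have := i1.isLt; omega⟩ = 1) (Classical.propDecidable _)

noncomputable def patR (x : Fin (n1 + n2) → ℝ) : T n2 := fun i2 =>
  @decide (x ⟨n1 + i2, by have := i2.isLt; omega⟩ = 1) (Classical.propDecidable _)

def pt (c : S n1) (d : T n2) : Fin (n1 + n2) → ℝ := fun i =>
  if h : (i : ℕ) < n1 then bit (c ⟨i, h⟩)
  else bit (d ⟨(i : ℕ) - n1, by have := i.isLt; omega⟩)

lemma pt_pat {x : Fin (n1 + n2) → ℝ} (hx : x ∈ booleanCube (n1 + n2)) :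
    pt n1 n2 (patL n1 n2 x) (patR n1 n2 x) = x := by
  funext i
  unfold pt
  split
  · next h =>
      unfold patL
      have hidx : (⟨(⟨(i : ℕ), h⟩ : Fin n1), by have := i.isLt; omega⟩ : Fin (n1 + n2)) = i :=
        Fin.ext rfl
      rw [hidx]
      rcases hx i with h0 | h1
      · rw [decide_eq_false (by rw [h0]; norm_num), h0]; rfl
      · rw [decide_eq_true h1, h1]; rfl
  · next h =>
      unfold patR
      have hidx : (⟨n1 + (⟨(i : ℕ) - n1, by have := i.isLt; omega⟩ : Fin n2), by have := i.isLt; omega⟩ : Fin (n1 + n2)) = i :=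
        Fin.ext (by simp; omega)
      rw [hidx]
      rcases hx i with h0 | h1
      · rw [decide_eq_false (by rw [h0]; norm_num), h0]; rfl
      · rw [decide_eq_true h1, h1]; rfl

lemma pt_mem_cube (c : S n1) (d : T n2) : pt n1 n2 c d ∈ booleanCube (n1 + n2) := by
  intro i
  unfold pt
  split
  · next => cases c ⟨(i : ℕ), by assumption⟩ <;> simp [bit]
  · next => cases d ⟨(i : ℕ) - n1, by have := i.isLt; omega⟩ <;> simp [bit]


variable (A : Set (Fin (n1 + n2) → ℝ))
noncomputable def chi (c : S n1) (d : T n2) : Bool :=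
  @decide (pt n1 n2 c d ∈ A) (Classical.propDecidable _)
lemma chi_iff (c : S n1) (d : T n2) : chi n1 n2 A c d = true ↔ pt n1 n2 c d ∈ A := by
  unfold chi; exact @decide_eq_true_iff _ (Classical.propDecidable _)
noncomputable def acoef : K n1 n2 → I n1 n2 → ℝ
  | .inl j0 => fun j => if j = j0 then -1 else 0
  | .inr (.inl c) => fun j =>
      match j with
      | .inl c' => if c' = c then 1 else 0
      | .inr d => cond (chi n1 n2 A c d) 0 1
  | .inr (.inr (side, sign)) => fun j =>
      match j with
      | .inl _ => cond side (cond sign 1 (-1)) 0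
      | .inr _ => cond side 0 (cond sign 1 (-1))
def bvec : K n1 n2 → ℝ
  | .inl _ => 0
  | .inr (.inl _) => 1
  | .inr (.inr (_, sign)) => cond sign 1 (-1)
noncomputable def R : Set (I n1 n2 → ℝ) :=
  {w | ∀ i, ∑ j, acoef n1 n2 A i j * w j ≤ bvec n1 n2 i}
lemma sum_nonneg_row (j0 : I n1 n2) (w : I n1 n2 → ℝ) :
    ∑ j, acoef n1 n2 A (.inl j0) j * w j = -(w j0) := by
  simp [acoef, ite_mul, Finset.sum_ite_eq']
lemma sum_A_row (c : S n1) (w : I n1 n2 → ℝ) :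
    ∑ j, acoef n1 n2 A (.inr (.inl c)) j * w j
      = w (.inl c) + ∑ d, cond (chi n1 n2 A c d) 0 (w (.inr d)) := by
  rw [Fintype.sum_sum_type]
  congr 1
  · simp [acoef, ite_mul, Finset.sum_ite_eq']
  · exact Finset.sum_congr rfl fun d _ => by simp only [acoef]; cases chi n1 n2 A c d <;> simp
lemma sum_eq_row (side sign : Bool) (w : I n1 n2 → ℝ) :
    ∑ j, acoef n1 n2 A (.inr (.inr (side, sign))) j * w j
      = cond sign 1 (-1) * (cond side (∑ c, w (.inl c)) (∑ d, w (.inr d))) := by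
  rw [Fintype.sum_sum_type]
  cases side <;> cases sign <;>
    simp [acoef, Finset.mul_sum, neg_one_mul, Finset.sum_neg_distrib]

lemma mem_R_iff (w : I n1 n2 → ℝ) :
    w ∈ R n1 n2 A ↔
      (∀ j, 0 ≤ w j) ∧ (∑ c, w (.inl c)) = 1 ∧ (∑ d, w (.inr d)) = 1 ∧
      ∀ c, w (.inl c) + ∑ d, cond (chi n1 n2 A c d) 0 (w (.inr d)) ≤ 1 := by
  constructor
  · intro h
    refine ⟨fun j => ?_, ?_, ?_, fun c => ?_⟩
    · have := h (.inl j); rw [sum_nonneg_row] at this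
      simpa [bvec] using this
    · have h1 := h (.inr (.inr (true, true)))
      have h2 := h (.inr (.inr (true, false)))
      rw [sum_eq_row] at h1 h2
      simp only [bvec, cond] at h1 h2
      linarith
    · have h1 := h (.inr (.inr (false, true)))
      have h2 := h (.inr (.inr (false, false)))
      rw [sum_eq_row] at h1 h2
      simp only [bvec, cond] at h1 h2
      linarith
    · have := h (.inr (.inl c)); rw [sum_A_row] at this
      simpa [bvec] using this
  · rintro ⟨h0, h1, h2, h3⟩ i
    match i with
    | .inl j0 => rw [sum_nonneg_row]; simpa [bvec] using h0 j0
    | .inr (.inl c) => rw [sum_A_row]; simpa [bvec] using h3 c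
    | .inr (.inr (side, sign)) =>
        rw [sum_eq_row]
        cases side <;> cases sign <;> simp [bvec, h1, h2]

lemma mem_R_nonneg {w : I n1 n2 → ℝ} (hw : w ∈ R n1 n2 A) : ∀ j, 0 ≤ w j :=
  ((mem_R_iff n1 n2 A w).1 hw).1

lemma mem_R_le_one {w : I n1 n2 → ℝ} (hw : w ∈ R n1 n2 A) : ∀ j, w j ≤ 1 := by
  obtain ⟨h0, h1, h2, -⟩ := (mem_R_iff n1 n2 A w).1 hw
  intro j
  match j with
  | .inl c =>
      calc w (.inl c) ≤ ∑ c', w (.inl c') :=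
            Finset.single_le_sum (fun c' _ => h0 (.inl c')) (Finset.mem_univ c)
        _ = 1 := h1
  | .inr d =>
      calc w (.inr d) ≤ ∑ d', w (.inr d') :=
            Finset.single_le_sum (fun d' _ => h0 (.inr d')) (Finset.mem_univ d)
        _ = 1 := h2

lemma proj_mem_Icc {w : I n1 n2 → ℝ} (hw : w ∈ R n1 n2 A) (i : Fin (n1 + n2)) :
    proj n1 n2 w i ∈ Set.Icc (0 : ℝ) 1 := by
  obtain ⟨h0, h1, h2, -⟩ := (mem_R_iff n1 n2 A w).1 hw
  by_cases h : (i : ℕ) < n1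
  · have heq : proj n1 n2 w i = ∑ c, bit (c ⟨i, h⟩) * w (.inl c) :=
      proj_apply_left n1 n2 w ⟨i, h⟩
    rw [heq]
    constructor
    · exact Finset.sum_nonneg fun c _ => mul_nonneg (bit_nonneg _) (h0 _)
    · calc ∑ c, bit (c ⟨i, h⟩) * w (.inl c) ≤ ∑ c, w (.inl c) :=
            Finset.sum_le_sum fun c _ => mul_le_of_le_one_left (h0 _) (bit_le_one _)
        _ = 1 := h1
  · have hieq : i = ⟨n1 + ((i : ℕ) - n1), by have := i.isLt; omega⟩ := Fin.ext (by show (i:ℕ) = n1 + ((i:ℕ) - n1); omega)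
    rw [hieq]
    have heq : proj n1 n2 w ⟨n1 + ((i : ℕ) - n1), by have := i.isLt; omega⟩
        = ∑ d, bit (d ⟨(i : ℕ) - n1, by have := i.isLt; omega⟩) * w (.inr d) :=
      proj_apply_right n1 n2 w ⟨(i : ℕ) - n1, by have := i.isLt; omega⟩
    rw [heq]
    constructor
    · exact Finset.sum_nonneg fun d _ => mul_nonneg (bit_nonneg _) (h0 _)
    · calc ∑ d, bit (d ⟨(i : ℕ) - n1, by have := i.isLt; omega⟩) * w (.inr d)
          ≤ ∑ d, w (.inr d) :=
            Finset.sum_le_sum fun d _ => mul_le_of_le_one_left (h0 _) (bit_le_one _)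
        _ = 1 := h2

lemma support_left {w : I n1 n2 → ℝ} (hw : w ∈ R n1 n2 A)
    (hx : proj n1 n2 w ∈ booleanCube (n1 + n2)) :
    ∀ c, c ≠ patL n1 n2 (proj n1 n2 w) → w (.inl c) = 0 := by
  obtain ⟨h0, h1, h2, h3⟩ := (mem_R_iff n1 n2 A w).1 hw
  intro c hc
  obtain ⟨i1, hi1⟩ := Function.ne_iff.1 hc
  have hs : proj n1 n2 w ⟨i1, by have := i1.isLt; omega⟩ = ∑ c', bit (c' i1) * w (.inl c') :=
    proj_apply_left n1 n2 w i1
  rcases hx ⟨i1, by have := i1.isLt; omega⟩ with h0x | h1x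
  · have hp : patL n1 n2 (proj n1 n2 w) i1 = false :=
      decide_eq_false (by rw [h0x]; norm_num)
    rw [hp] at hi1
    have hct : c i1 = true := by simpa using hi1
    have hzero : ∑ c', bit (c' i1) * w (.inl c') = 0 := by rw [← hs]; exact h0x
    have := (Finset.sum_eq_zero_iff_of_nonneg
        (fun c' _ => mul_nonneg (bit_nonneg _) (h0 _))).1 hzero c (Finset.mem_univ c)
    rw [hct] at this
    simpa [bit] using this
  · have hp : patL n1 n2 (proj n1 n2 w) i1 = true := decide_eq_true h1x
    rw [hp] at hi1
    have hcf : c i1 = false := by simpa using hi1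
    have hsum1 : ∑ c', bit (c' i1) * w (.inl c') = 1 := by rw [← hs]; exact h1x
    have hzero : ∑ c', (1 - bit (c' i1)) * w (.inl c') = 0 := by
      simp only [sub_mul, one_mul, Finset.sum_sub_distrib, hsum1, h1, sub_self]
    have := (Finset.sum_eq_zero_iff_of_nonneg
        (fun c' _ => mul_nonneg (by have := bit_le_one (c' i1); linarith) (h0 _))).1 hzero
        c (Finset.mem_univ c)
    rw [hcf] at this
    simpa [bit] using this

lemma support_right {w : I n1 n2 → ℝ} (hw : w ∈ R n1 n2 A)
    (hx : proj n1 n2 w ∈ booleanCube (n1 + n2)) :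
    ∀ d, d ≠ patR n1 n2 (proj n1 n2 w) → w (.inr d) = 0 := by
  obtain ⟨h0, h1, h2, h3⟩ := (mem_R_iff n1 n2 A w).1 hw
  intro d hd
  obtain ⟨i2, hi2⟩ := Function.ne_iff.1 hd
  have hs : proj n1 n2 w ⟨n1 + i2, by have := i2.isLt; omega⟩ = ∑ d', bit (d' i2) * w (.inr d') :=
    proj_apply_right n1 n2 w i2
  rcases hx ⟨n1 + i2, by have := i2.isLt; omega⟩ with h0x | h1x
  · have hp : patR n1 n2 (proj n1 n2 w) i2 = false :=
      decide_eq_false (by rw [h0x]; norm_num)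
    rw [hp] at hi2
    have hct : d i2 = true := by simpa using hi2
    have hzero : ∑ d', bit (d' i2) * w (.inr d') = 0 := by rw [← hs]; exact h0x
    have := (Finset.sum_eq_zero_iff_of_nonneg
        (fun d' _ => mul_nonneg (bit_nonneg _) (h0 _))).1 hzero d (Finset.mem_univ d)
    rw [hct] at this
    simpa [bit] using this
  · have hp : patR n1 n2 (proj n1 n2 w) i2 = true := decide_eq_true h1x
    rw [hp] at hi2
    have hcf : d i2 = false := by simpa using hi2
    have hsum1 : ∑ d', bit (d' i2) * w (.inr d') = 1 := by rw [← hs]; exact h1x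
    have hzero : ∑ d', (1 - bit (d' i2)) * w (.inr d') = 0 := by
      simp only [sub_mul, one_mul, Finset.sum_sub_distrib, hsum1, h2, sub_self]
    have := (Finset.sum_eq_zero_iff_of_nonneg
        (fun d' _ => mul_nonneg (by have := bit_le_one (d' i2); linarith) (h0 _))).1 hzero
        d (Finset.mem_univ d)
    rw [hcf] at this
    simpa [bit] using this

lemma weight_left_one {w : I n1 n2 → ℝ} (hw : w ∈ R n1 n2 A)
    (hx : proj n1 n2 w ∈ booleanCube (n1 + n2)) :
    w (.inl (patL n1 n2 (proj n1 n2 w))) = 1 := by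
  obtain ⟨h0, h1, h2, h3⟩ := (mem_R_iff n1 n2 A w).1 hw
  rw [← h1]
  exact (Finset.sum_eq_single _ (fun c _ hc => support_left n1 n2 A hw hx c hc)
    (fun h => absurd (Finset.mem_univ _) h)).symm

lemma weight_right_one {w : I n1 n2 → ℝ} (hw : w ∈ R n1 n2 A)
    (hx : proj n1 n2 w ∈ booleanCube (n1 + n2)) :
    w (.inr (patR n1 n2 (proj n1 n2 w))) = 1 := by
  obtain ⟨h0, h1, h2, h3⟩ := (mem_R_iff n1 n2 A w).1 hw
  rw [← h2]
  exact (Finset.sum_eq_single _ (fun d _ hd => support_right n1 n2 A hw hx d hd)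
    (fun h => absurd (Finset.mem_univ _) h)).symm

lemma main_inter (hA : A ⊆ booleanCube (n1 + n2)) :
    (⇑(proj n1 n2) '' R n1 n2 A) ∩ booleanCube (n1 + n2) = A := by
  ext x
  constructor
  · rintro ⟨⟨w, hw, rfl⟩, hx⟩
    obtain ⟨h0, h1, h2, h3⟩ := (mem_R_iff n1 n2 A w).1 hw
    set cx := patL n1 n2 (proj n1 n2 w) with hcx
    set dx := patR n1 n2 (proj n1 n2 w) with hdx
    have hL : w (.inl cx) = 1 := weight_left_one n1 n2 A hw hx
    have hR : w (.inr dx) = 1 := weight_right_one n1 n2 A hw hx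
    have hcon := h3 cx
    rw [hL] at hcon
    have hsum0 : ∑ d, cond (chi n1 n2 A cx d) 0 (w (.inr d)) ≤ 0 := by linarith
    have hterm : ∀ d ∈ Finset.univ, (0:ℝ) ≤ cond (chi n1 n2 A cx d) 0 (w (.inr d)) := by
      intro d _
      cases chi n1 n2 A cx d
      · exact h0 _
      · exact le_refl 0
    have hzero : ∑ d, cond (chi n1 n2 A cx d) 0 (w (.inr d)) = 0 :=
      le_antisymm hsum0 (Finset.sum_nonneg hterm)
    have hdx0 := (Finset.sum_eq_zero_iff_of_nonneg hterm).1 hzero dx (Finset.mem_univ dx)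
    cases hchi : chi n1 n2 A cx dx with
    | false =>
        exfalso
        rw [hchi] at hdx0
        simp only [cond] at hdx0
        rw [hR] at hdx0
        norm_num at hdx0
    | true =>
        have := (chi_iff n1 n2 A cx dx).1 hchi
        rwa [pt_pat n1 n2 hx] at this
  · intro hxA
    have hx : x ∈ booleanCube (n1 + n2) := hA hxA
    set cx := patL n1 n2 x with hcx
    set dx := patR n1 n2 x with hdx
    refine ⟨⟨fun j => match j with
      | .inl c => if c = cx then 1 else 0
      | .inr d => if d = dx then 1 else 0, ?_, ?_⟩, hx⟩
    · rw [mem_R_iff]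
      refine ⟨fun j => ?_, ?_, ?_, fun c => ?_⟩
      · match j with
        | .inl c => dsimp only; positivity
        | .inr d => dsimp only; positivity
      · simp
      · simp
      · dsimp only
        have hsum : ∑ d, cond (chi n1 n2 A c d) 0 (if d = dx then (1:ℝ) else 0)
            = cond (chi n1 n2 A c dx) 0 1 := by
          rw [Finset.sum_eq_single dx]
          · simp
          · intro d _ hd
            rw [if_neg hd]
            cases chi n1 n2 A c d <;> simp
          · intro h; exact absurd (Finset.mem_univ _) h
        rw [hsum]
        by_cases hc : c = cx
        · rw [hc]
          have hct : chi n1 n2 A cx dx = true := by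
            rw [chi_iff]
            show pt n1 n2 (patL n1 n2 x) (patR n1 n2 x) ∈ A
            rw [pt_pat n1 n2 hx]; exact hxA
          rw [hct, if_pos rfl]
          norm_num
        · rw [if_neg hc]
          cases chi n1 n2 A c dx <;> norm_num
    · funext i
      by_cases h : (i : ℕ) < n1
      · have heq : proj n1 n2 (fun j => match j with
            | .inl c => if c = cx then (1:ℝ) else 0
            | .inr d => if d = dx then (1:ℝ) else 0) i
            = ∑ c, bit (c ⟨i, h⟩) * (if c = cx then (1:ℝ) else 0) :=
          proj_apply_left n1 n2 _ ⟨i, h⟩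
        rw [heq]
        have : ∑ c, bit (c ⟨i, h⟩) * (if c = cx then (1:ℝ) else 0) = bit (cx ⟨i, h⟩) := by
          rw [Finset.sum_eq_single cx]
          · simp
          · intro c _ hc; rw [if_neg hc, mul_zero]
          · intro h'; exact absurd (Finset.mem_univ _) h'
        rw [this]
        have hidx : (⟨((⟨(i:ℕ), h⟩ : Fin n1) : ℕ), by have := i.isLt; omega⟩ : Fin (n1+n2)) = i :=
          Fin.ext rfl
        rcases hx i with h0x | h1x
        · rw [hcx]; unfold patL
          rw [hidx, decide_eq_false (by rw [h0x]; norm_num), h0x]; rfl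
        · rw [hcx]; unfold patL
          rw [hidx, decide_eq_true h1x, h1x]; rfl
      · have hieq : i = ⟨n1 + ((i : ℕ) - n1), by have := i.isLt; omega⟩ :=
          Fin.ext (by show (i:ℕ) = n1 + ((i:ℕ) - n1); omega)
        rw [hieq]
        have heq : proj n1 n2 (fun j => match j with
            | .inl c => if c = cx then (1:ℝ) else 0
            | .inr d => if d = dx then (1:ℝ) else 0) ⟨n1 + ((i : ℕ) - n1), by have := i.isLt; omega⟩
            = ∑ d, bit (d ⟨(i:ℕ) - n1, by have := i.isLt; omega⟩) * (if d = dx then (1:ℝ) else 0) :=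
          proj_apply_right n1 n2 _ ⟨(i:ℕ) - n1, by have := i.isLt; omega⟩
        rw [heq]
        have : ∑ d, bit (d ⟨(i:ℕ) - n1, by have := i.isLt; omega⟩) * (if d = dx then (1:ℝ) else 0)
            = bit (dx ⟨(i:ℕ) - n1, by have := i.isLt; omega⟩) := by
          rw [Finset.sum_eq_single dx]
          · simp
          · intro d _ hd; rw [if_neg hd, mul_zero]
          · intro h'; exact absurd (Finset.mem_univ _) h'
        rw [this]
        rcases hx ⟨n1 + ((i : ℕ) - n1), by have := i.isLt; omega⟩ with h0x | h1x
        · rw [hdx]; unfold patR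
          rw [decide_eq_false (by rw [h0x]; norm_num), h0x]; rfl
        · rw [hdx]; unfold patR
          rw [decide_eq_true h1x, h1x]; rfl

end SepAux


/-- Every `A ⊆ {0,1}^n` has a separating polytope contained in `[0,1]^n`
with extension complexity `O(2^{n/2})`. -/
theorem sep_upper_bound :
    ∃ C : ℕ, ∀ n : ℕ, 1 ≤ n → ∀ A : Set (Fin n → ℝ), A ⊆ booleanCube n →
      ∃ (m k : ℕ) (Q : Set (Fin m → ℝ)) (π : (Fin m → ℝ) →ᵃ[ℝ] (Fin n → ℝ)),
        k ≤ C * 2 ^ ((n + 1) / 2) ∧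
        Bornology.IsBounded Q ∧
        CutOutBy Q k ∧
        π '' Q ⊆ Set.univ.pi (fun _ => Set.Icc (0 : ℝ) 1) ∧
        π '' Q ∩ booleanCube n = A := by
  refine ⟨7, ?_⟩
  intro n hn A hA
  obtain ⟨n1, n2, rfl, hle1, hle2⟩ :
      ∃ n1 n2, n = n1 + n2 ∧ n2 ≤ n1 ∧ n1 ≤ (n1 + n2 + 1) / 2 := by
    exact ⟨(n + 1) / 2, n - (n + 1) / 2, by omega, by omega, by omega⟩
  classical
  set m := Fintype.card (SepAux.I n1 n2) with hm
  set k := Fintype.card (SepAux.K n1 n2) with hk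
  set e := Fintype.equivFin (SepAux.I n1 n2) with he
  set f := Fintype.equivFin (SepAux.K n1 n2) with hf
  set a' : Fin k → Fin m → ℝ := fun i j => SepAux.acoef n1 n2 A (f.symm i) (e.symm j) with ha'
  set b' : Fin k → ℝ := fun i => SepAux.bvec n1 n2 (f.symm i) with hb'
  set Q : Set (Fin m → ℝ) := {y | ∀ i, ∑ j, a' i j * y j ≤ b' i} with hQ
  set Lmap : (Fin m → ℝ) →ₗ[ℝ] (SepAux.I n1 n2 → ℝ) :=
    { toFun := fun y j => y (e j)
      map_add' := fun _ _ => rfl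
      map_smul' := fun _ _ => rfl } with hL
  have hQR : ∀ y, y ∈ Q ↔ Lmap y ∈ SepAux.R n1 n2 A := by
    intro y
    have hsum : ∀ i : SepAux.K n1 n2,
        (∑ j : SepAux.I n1 n2, SepAux.acoef n1 n2 A i j * y (e j))
          = ∑ j : Fin m, SepAux.acoef n1 n2 A i (e.symm j) * y j := by
      intro i
      exact Fintype.sum_equiv e _ _ (fun j => by rw [Equiv.symm_apply_apply])
    constructor
    · intro hy i
      have := hy (f i)
      simp only [ha', hb', Equiv.symm_apply_apply] at this
      rw [← hsum i] at this
      exact this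
    · intro hw i
      have := hw (f.symm i)
      simp only [hL, LinearMap.coe_mk, AddHom.coe_mk] at this
      rw [hsum (f.symm i)] at this
      simp only [ha', hb']
      exact this
  refine ⟨m, k, Q, ((SepAux.proj n1 n2).comp Lmap).toAffineMap, ?_, ?_, ?_, ?_, ?_⟩
  · have hcard : k = 2 ^ n1 + 2 ^ n2 + (2 ^ n1 + 4) := by
      rw [hk]
      simp [SepAux.K, SepAux.I, SepAux.S, SepAux.T, Fintype.card_sum, Fintype.card_prod,
        Fintype.card_fun]
    have e1 : 2 ^ n1 ≤ 2 ^ ((n1 + n2 + 1) / 2) := Nat.pow_le_pow_right (by norm_num) hle2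
    have e2 : 2 ^ n2 ≤ 2 ^ n1 := Nat.pow_le_pow_right (by norm_num) hle1
    have e3 : 1 ≤ 2 ^ ((n1 + n2 + 1) / 2) := Nat.one_le_two_pow
    omega
  · apply Bornology.IsBounded.subset (Metric.isBounded_closedBall (x := (0 : Fin m → ℝ)) (r := 1))
    intro y hy
    have hR := (hQR y).1 hy
    rw [Metric.mem_closedBall, dist_zero_right]
    rw [pi_norm_le_iff_of_nonneg zero_le_one]
    intro j
    have h1 : Lmap y (e.symm j) = y j := by simp [hL]
    have h2 : 0 ≤ Lmap y (e.symm j) := SepAux.mem_R_nonneg n1 n2 A hR _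
    have h3 : Lmap y (e.symm j) ≤ 1 := SepAux.mem_R_le_one n1 n2 A hR _
    rw [h1] at h2 h3
    rw [Real.norm_eq_abs]
    exact abs_le.2 ⟨by linarith, h3⟩
  · exact ⟨a', b', rfl⟩
  · rintro z ⟨y, hy, rfl⟩
    intro i _
    exact SepAux.proj_mem_Icc n1 n2 A ((hQR y).1 hy) i
  · have himg : (((SepAux.proj n1 n2).comp Lmap).toAffineMap : (Fin m → ℝ) → (Fin (n1+n2) → ℝ)) '' Q
        = ⇑(SepAux.proj n1 n2) '' SepAux.R n1 n2 A := by
      ext z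
      constructor
      · rintro ⟨y, hy, rfl⟩
        exact ⟨Lmap y, (hQR y).1 hy, rfl⟩
      · rintro ⟨w, hw, rfl⟩
        refine ⟨fun j => w (e.symm j), ?_, ?_⟩
        · rw [hQR]
          have : Lmap (fun j => w (e.symm j)) = w := by
            funext j'; simp [hL]
          rwa [this]
        · have : Lmap (fun j => w (e.symm j)) = w := by
            funext j'; simp [hL]
          show SepAux.proj n1 n2 (Lmap fun j => w (e.symm j)) = SepAux.proj n1 n2 w
          rw [this]
    rw [himg]
    exact SepAux.main_inter n1 n2 A hA
end

section
/- Let n ≥ 2 and let ODD_n ⊆ {0,1}^n be the set of Boolean vectors with an odd number of coordinates equal to 1. If P ⊆ ℝ^n is an intersection of r closed halfspaces (i.e., P = {x | ∀ i ∈ Fin r, ∑_j a i j · x j ≤ b i} for some a, b) and P ∩ {0,1}^n = ODD_n, then r ≥ 2^{n−1}. -/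
/-- The set of Boolean vectors with an odd number of coordinates equal to 1. -/
def oddCube (n : ℕ) : Set (Fin n → ℝ) :=
  {x | x ∈ booleanCube n ∧ Odd ({i | x i = 1}.ncard)}

open Finset

/-- Characteristic vector of a finite set of coordinates. -/
noncomputable def chiVec {n : ℕ} (s : Finset (Fin n)) : Fin n → ℝ :=
  fun i => if i ∈ s then 1 else 0

/-- Flip coordinate `j`. -/
noncomputable def flipSet {n : ℕ} (j : Fin n) (s : Finset (Fin n)) : Finset (Fin n) :=
  if j ∈ s then s.erase j else insert j s

lemma chiVec_mem_cube {n : ℕ} (s : Finset (Fin n)) : chiVec s ∈ booleanCube n := by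
  intro i
  by_cases h : i ∈ s <;> simp [chiVec, h]

lemma chiVec_oneset {n : ℕ} (s : Finset (Fin n)) : {i | chiVec s i = 1} = ↑s := by
  ext i
  by_cases h : i ∈ s <;> simp [chiVec, h]

lemma chiVec_ncard {n : ℕ} (s : Finset (Fin n)) : {i | chiVec s i = 1}.ncard = s.card := by
  rw [chiVec_oneset, Set.ncard_coe_finset]

lemma flip_parity {n : ℕ} (j : Fin n) (s : Finset (Fin n)) (hs : Even s.card) :
    Odd (flipSet j s).card := by
  unfold flipSet
  by_cases h : j ∈ s
  · rw [if_pos h, Finset.card_erase_of_mem h]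
    exact Nat.Even.sub_odd (Finset.one_le_card.mpr ⟨j, h⟩) hs odd_one
  · rw [if_neg h, Finset.card_insert_of_notMem h]
    exact Even.add_one hs

lemma flip_chi_at {n : ℕ} (j : Fin n) (s : Finset (Fin n)) :
    chiVec (flipSet j s) j = 1 - chiVec s j := by
  unfold flipSet chiVec
  by_cases h : j ∈ s <;> simp [h]

lemma flip_chi_ne {n : ℕ} (j k : Fin n) (s : Finset (Fin n)) (hk : k ≠ j) :
    chiVec (flipSet j s) k = chiVec s k := by
  unfold flipSet chiVec
  by_cases h : j ∈ s <;> simp [h, Finset.mem_erase, Finset.mem_insert, hk]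

/-- Number of even-cardinality subsets of `Fin n` is `2^(n-1)` for `n ≥ 1`. -/
lemma card_even_subsets (n : ℕ) (hn : 1 ≤ n) :
    (univ.filter fun s : Finset (Fin n) => Even s.card).card = 2 ^ (n - 1) := by
  classical
  set j0 : Fin n := ⟨0, hn⟩ with hj0
  have key : (univ.filter fun s : Finset (Fin n) => Even s.card).card
      = (univ.filter fun s : Finset (Fin n) => ¬ Even s.card).card := by
    apply Finset.card_bij' (fun s _ => flipSet j0 s) (fun s _ => flipSet j0 s)
    · intro s hs
      simp only [Finset.mem_filter, Finset.mem_univ, true_and] at hs ⊢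
      rw [Nat.not_even_iff_odd]
      exact flip_parity j0 s hs
    · intro s hs
      simp only [Finset.mem_filter, Finset.mem_univ, true_and] at hs ⊢
      rw [Nat.not_even_iff_odd] at hs
      unfold flipSet
      by_cases h : j0 ∈ s
      · rw [if_pos h, Finset.card_erase_of_mem h]
        rcases hs with ⟨m, hm⟩
        exact ⟨m, by omega⟩
      · rw [if_neg h, Finset.card_insert_of_notMem h]
        rcases hs with ⟨m, hm⟩
        exact ⟨m + 1, by omega⟩
    · intro s _
      unfold flipSet
      by_cases h : j0 ∈ s
      · rw [if_pos h]
        rw [if_neg (Finset.notMem_erase j0 s), Finset.insert_erase h]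
      · rw [if_neg h]
        rw [if_pos (Finset.mem_insert_self j0 s), Finset.erase_insert h]
    · intro s _
      unfold flipSet
      by_cases h : j0 ∈ s
      · rw [if_pos h]
        rw [if_neg (Finset.notMem_erase j0 s), Finset.insert_erase h]
      · rw [if_neg h]
        rw [if_pos (Finset.mem_insert_self j0 s), Finset.erase_insert h]
  have total := Finset.card_filter_add_card_filter_not
    (s := (univ : Finset (Finset (Fin n)))) (p := fun s => Even s.card)
  have huniv : (univ : Finset (Finset (Fin n))).card = 2 ^ n := by
    simp [Finset.card_univ]
  have h2 : 2 ^ n = 2 * 2 ^ (n - 1) := by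
    rw [← pow_succ']
    congr 1
    omega
  omega

/-- Every separating polytope for `ODD_n` given directly as an intersection of
`r` closed halfspaces satisfies `r ≥ 2^{n-1}`. -/
theorem odd_needs_many_facets (n r : ℕ) (hn : 2 ≤ n)
    (a : Fin r → Fin n → ℝ) (b : Fin r → ℝ)
    (P : Set (Fin n → ℝ))
    (hP : P = {x | ∀ i, ∑ j, a i j * x j ≤ b i})
    (hsep : P ∩ booleanCube n = oddCube n) :
    2 ^ (n - 1) ≤ r := by
  classical
  -- Odd characteristic vectors lie in P.
  have hodd_in_P : ∀ s : Finset (Fin n), Odd s.card →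
      ∀ i, ∑ j, a i j * chiVec s j ≤ b i := by
    intro s hs i
    have hmem : chiVec s ∈ oddCube n := ⟨chiVec_mem_cube s, by rw [chiVec_ncard]; exact hs⟩
    rw [← hsep] at hmem
    have := hmem.1
    rw [hP] at this
    exact this i
  -- Even characteristic vectors violate some inequality.
  have hviol : ∀ s : Finset (Fin n), Even s.card →
      ∃ i, b i < ∑ j, a i j * chiVec s j := by
    intro s hs
    by_contra h
    push_neg at h
    have hin : chiVec s ∈ P := by
      rw [hP]; exact h
    have : chiVec s ∈ oddCube n := by
      rw [← hsep]; exact ⟨hin, chiVec_mem_cube s⟩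
    have hodd := this.2
    rw [chiVec_ncard] at hodd
    exact (Nat.not_even_iff_odd.mpr hodd) hs
  -- Choose a violated inequality for each even set.
  have hr0 : 0 < r := by
    obtain ⟨i, _⟩ := hviol ∅ (by simp)
    exact i.pos
  have : Nonempty (Fin r) := ⟨⟨0, hr0⟩⟩
  let g : Finset (Fin n) → Fin r := fun s =>
    if h : ∃ i, b i < ∑ j, a i j * chiVec s j then h.choose else Classical.arbitrary _
  have hg : ∀ s : Finset (Fin n), Even s.card →
      b (g s) < ∑ j, a (g s) j * chiVec s j := by
    intro s hs
    have h := hviol s hs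
    simp only [g, dif_pos h]
    exact h.choose_spec
  -- g is injective on even sets.
  have hinj : Set.InjOn g ((univ.filter fun s : Finset (Fin n) => Even s.card) : Finset _) := by
    intro s hs t ht hst
    simp only [Finset.coe_filter, Set.mem_setOf_eq] at hs ht
    by_contra hne
    -- pick a coordinate where s and t differ
    obtain ⟨j, hj⟩ : ∃ j, (j ∈ s ∧ j ∉ t) ∨ (j ∈ t ∧ j ∉ s) := by
      by_contra hc
      push_neg at hc
      apply hne
      ext k
      have := hc k
      tauto
    have hvs : b (g s) < ∑ j, a (g s) j * chiVec s j := hg s hs.2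
    have hvt : b (g s) < ∑ j, a (g s) j * chiVec t j := by
      rw [hst]; exact hg t ht.2
    set i := g s with hi
    have hs' := hodd_in_P (flipSet j s) (flip_parity j s hs.2) i
    have ht' := hodd_in_P (flipSet j t) (flip_parity j t ht.2) i
    -- pointwise identity: chi(s') + chi(t') = chi(s) + chi(t)
    have hpt : ∀ k, chiVec (flipSet j s) k + chiVec (flipSet j t) k
        = chiVec s k + chiVec t k := by
      intro k
      by_cases hk : k = j
      · subst hk
        rw [flip_chi_at, flip_chi_at]
        have h1 : chiVec s k = 1 ∧ chiVec t k = 0 ∨ chiVec s k = 0 ∧ chiVec t k = 1 := by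
          rcases hj with ⟨h1, h2⟩ | ⟨h1, h2⟩
          · left; constructor <;> simp [chiVec, h1, h2]
          · right; constructor <;> simp [chiVec, h1, h2]
        rcases h1 with ⟨e1, e2⟩ | ⟨e1, e2⟩ <;> rw [e1, e2] <;> ring
      · rw [flip_chi_ne j k s hk, flip_chi_ne j k t hk]
    have hsum : ∑ k, a i k * chiVec (flipSet j s) k + ∑ k, a i k * chiVec (flipSet j t) k
        = ∑ k, a i k * chiVec s k + ∑ k, a i k * chiVec t k := by
      rw [← Finset.sum_add_distrib, ← Finset.sum_add_distrib]
      apply Finset.sum_congr rfl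
      intro k _
      rw [← mul_add, ← mul_add, hpt k]
    linarith
  -- Conclude by counting.
  have hcard := Finset.card_le_card_of_injOn g
    (fun s _ => Finset.mem_univ (g s)) hinj
  rw [card_even_subsets n (by omega)] at hcard
  simpa using hcard
end

section
/- Let n ≥ 2, let a : Fin n → ℝ and b ∈ ℝ, and let H = {x : Fin n → ℝ | ∑_i a i · x i ≥ b} be a closed halfspace. If H contains every Boolean vector with an odd number of 1-coordinates, then the complement of H contains at most one Boolean vector with an even number of 1-coordinates. -/
lemma sum_update_aux (n : ℕ) (a x : Fin n → ℝ) (i : Fin n) (v : ℝ) :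
    ∑ j, a j * Function.update x i v j = (∑ j, a j * x j) - a i * x i + a i * v := by
  have h : ∀ j, a j * Function.update x i v j
      = Function.update (fun j => a j * x j) i (a i * v) j := by
    intro j
    rcases eq_or_ne j i with rfl | h
    · simp
    · simp [Function.update_of_ne h]
  rw [Finset.sum_congr rfl fun j _ => h j,
    Finset.sum_update_of_mem (Finset.mem_univ i),
    ← Finset.add_sum_erase _ (fun j => a j * x j) (Finset.mem_univ i)]
  simp [Finset.sdiff_singleton_eq_erase]
  ring

lemma update_mem_cube {n : ℕ} {x : Fin n → ℝ} (hx : x ∈ booleanCube n) (i : Fin n)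
    {v : ℝ} (hv : v = 0 ∨ v = 1) : Function.update x i v ∈ booleanCube n := by
  intro j
  rcases eq_or_ne j i with rfl | h
  · simpa using hv
  · simpa [Function.update_of_ne h] using hx j

lemma odd_after_flip {n : ℕ} {x : Fin n → ℝ} (hx : x ∈ booleanCube n) (i : Fin n)
    (hev : Even ({j | x j = 1}.ncard)) {v : ℝ} (hvi : x i ≠ v) (hv : v = 0 ∨ v = 1) :
    Odd ({j | Function.update x i v j = 1}.ncard) := by
  have hfin : ({j | x j = 1} : Set (Fin n)).Finite := Set.toFinite _
  rcases hv with rfl | rfl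
  · -- v = 0 : x i = 1, remove i
    have hxi : x i = 1 := (hx i).resolve_left hvi
    have hset : {j | Function.update x i (0:ℝ) j = 1} = {j | x j = 1} \ {i} := by
      ext j
      rcases eq_or_ne j i with rfl | h
      · simp
      · simp [Function.update_of_ne h, h]
    have hmem : i ∈ {j | x j = 1} := hxi
    have hcard : ({j | x j = 1} \ {i} : Set (Fin n)).ncard = {j | x j = 1}.ncard - 1 :=
      Set.ncard_diff_singleton_of_mem hmem
    have hpos : 1 ≤ {j | x j = 1}.ncard := Set.ncard_pos hfin |>.2 ⟨i, hmem⟩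
    rw [hset, hcard]
    exact Nat.Even.sub_odd hpos hev odd_one
  · -- v = 1 : x i = 0, insert i
    have hset : {j | Function.update x i (1:ℝ) j = 1} = insert i {j | x j = 1} := by
      ext j
      rcases eq_or_ne j i with rfl | h
      · simp
      · simp [Function.update_of_ne h, h]
    have hnmem : i ∉ {j | x j = 1} := hvi
    rw [hset, Set.ncard_insert_of_notMem hnmem hfin]
    exact Even.add_one hev

/-- If a closed halfspace contains all odd Boolean vectors, then its complement
contains at most one even Boolean vector. -/
theorem halfspace_complement_at_most_one_even (n : ℕ) (hn : 2 ≤ n)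
    (a : Fin n → ℝ) (b : ℝ) (H : Set (Fin n → ℝ))
    (hH : H = {x | b ≤ ∑ i, a i * x i})
    (hodd : ∀ x ∈ booleanCube n, Odd ({i | x i = 1}.ncard) → x ∈ H) :
    Set.Subsingleton {x | x ∈ booleanCube n ∧ Even ({i | x i = 1}.ncard) ∧ x ∉ H} := by
  subst hH
  rintro x ⟨hxC, hxE, hxH⟩ y ⟨hyC, hyE, hyH⟩
  by_contra hxy
  -- pick a coordinate where they differ
  obtain ⟨i, hi⟩ : ∃ i, x i ≠ y i := by
    by_contra h
    push_neg at h
    exact hxy (funext h)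
  have hSx : ∑ j, a j * x j < b := lt_of_not_ge hxH
  have hSy : ∑ j, a j * y j < b := lt_of_not_ge hyH
  -- flip coordinate i in x (to y i) and in y (to x i)
  have hx' := hodd _ (update_mem_cube hxC i (hyC i))
    (odd_after_flip hxC i hxE hi (hyC i))
  have hy' := hodd _ (update_mem_cube hyC i (hxC i))
    (odd_after_flip hyC i hyE (Ne.symm hi) (hxC i))
  simp only [Set.mem_setOf_eq, sum_update_aux] at hx' hy'
  linarith
end

section
/- Let n ≥ 1 and let H be a set of Boolean vectors in {0,1}^n each having exactly two coordinates equal to 1; write i ~ j (for i ≠ j) when the vector e_i + e_j lies in H, and let N(i) = {j | i ~ j}. Define R_H = {x : Fin n → ℝ | (∀ i, 0 ≤ x i) ∧ (∑_i x i = 2) ∧ (∀ i, x i ≤ ∑_{j ∈ N(i)} x j)}. Then R_H ⊆ [0,1]^n and R_H ∩ {0,1}^n = H. -/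
/-- A boolean vector whose set of ones is `{i, j}` equals `e_i + e_j`. -/
lemma eq_single_add_single {n : ℕ} {x : Fin n → ℝ} (hb : ∀ k, x k = 0 ∨ x k = 1)
    {i j : Fin n} (hij : i ≠ j) (hones : ∀ k, x k = 1 ↔ (k = i ∨ k = j)) :
    x = Pi.single i 1 + Pi.single j 1 := by
  funext k
  by_cases hk : k = i
  · subst hk
    simp [Pi.single_apply, hij.symm, (hones k).2 (Or.inl rfl)]
  · by_cases hk' : k = j
    · subst hk'
      simp [Pi.single_apply, hk, (hones k).2 (Or.inr rfl)]
    · have : x k = 0 := by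
        rcases hb k with h | h
        · exact h
        · exact absurd ((hones k).1 h) (by simp [hk, hk'])
      simp [Pi.single_apply, hk, hk', this]

/-- For a set `H` of Boolean vectors of Hamming weight two (the edges of a graph),
the polytope `R_H` defined by `2n` inequalities and one equation satisfies
`R_H ⊆ [0,1]^n` and `R_H ∩ {0,1}^n = H`. -/
theorem graph_separating_polytope (n : ℕ) (hn : 1 ≤ n)
    (H : Set (Fin n → ℝ))
    (hH : ∀ x ∈ H, x ∈ booleanCube n ∧ {i | x i = 1}.ncard = 2)
    (N : Fin n → Set (Fin n))
    (hN : ∀ i, N i = {j | i ≠ j ∧ (Pi.single i 1 + Pi.single j 1 : Fin n → ℝ) ∈ H})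
    (R : Set (Fin n → ℝ))
    (hR : R = {x | (∀ i, 0 ≤ x i) ∧ (∑ i, x i = 2) ∧
      ∀ i, x i ≤ ∑ j, (N i).indicator x j}) :
    R ⊆ Set.univ.pi (fun _ => Set.Icc (0 : ℝ) 1) ∧ R ∩ booleanCube n = H := by
  subst hR
  have hiN : ∀ i, i ∉ N i := by
    intro i
    rw [hN]; simp
  constructor
  · rintro x ⟨hx0, hxs, hxc⟩ i -
    refine ⟨hx0 i, ?_⟩
    have h1 : ∑ j, (N i).indicator x j = ∑ j ∈ Finset.univ.erase i, (N i).indicator x j := by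
      rw [Finset.sum_erase _ (Set.indicator_of_notMem (hiN i) x)]
    have h2 : ∑ j ∈ Finset.univ.erase i, (N i).indicator x j
        ≤ ∑ j ∈ Finset.univ.erase i, x j := by
      refine Finset.sum_le_sum fun j _ => ?_
      exact Set.indicator_le_self' (fun k _ => hx0 k) j
    have h3 : ∑ j ∈ Finset.univ.erase i, x j = (∑ j, x j) - x i :=
      Finset.sum_erase_eq_sub (Finset.mem_univ i)
    have := hxc i
    rw [h1] at this
    have := this.trans h2
    rw [h3, hxs] at this
    linarith
  · apply Set.Subset.antisymm
    · rintro x ⟨⟨hx0, hxs, hxc⟩, hb⟩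
      -- x is boolean with sum 2, so its ones set is {i, j}
      set S : Finset (Fin n) := Finset.univ.filter (fun k => x k = 1) with hS
      have hsum : (∑ k, x k) = (S.card : ℝ) := by
        rw [← Finset.sum_subset (Finset.subset_univ S)
          (fun k _ hk => by
            rcases hb k with h | h
            · exact h
            · exact absurd (Finset.mem_filter.mpr ⟨Finset.mem_univ k, h⟩) hk)]
        rw [Finset.sum_congr rfl (fun k hk => (Finset.mem_filter.mp hk).2)]
        simp [hS]
      have hcard : S.card = 2 := by
        have : (S.card : ℝ) = 2 := by rw [← hsum, hxs]
        exact_mod_cast this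
      obtain ⟨i, j, hij, hSij⟩ := Finset.card_eq_two.mp hcard
      have hones : ∀ k, x k = 1 ↔ (k = i ∨ k = j) := by
        intro k
        constructor
        · intro h
          have : k ∈ S := Finset.mem_filter.mpr ⟨Finset.mem_univ k, h⟩
          rw [hSij] at this; simpa using this
        · rintro (rfl | rfl)
          · have : k ∈ S := by rw [hSij]; simp
            exact (Finset.mem_filter.mp this).2
          · have : k ∈ S := by rw [hSij]; simp
            exact (Finset.mem_filter.mp this).2
      have hxeq : x = Pi.single i 1 + Pi.single j 1 := eq_single_add_single hb hij hones
      -- show j ∈ N i using the constraint at i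
      by_contra hxH
      have hjNi : j ∉ N i := by
        intro hj
        rw [hN] at hj
        exact hxH (hxeq ▸ hj.2)
      have hzero : ∑ k, (N i).indicator x k = 0 := by
        apply Finset.sum_eq_zero
        intro k _
        by_cases hk : k ∈ N i
        · rw [Set.indicator_of_mem hk]
          rcases hb k with h | h
          · exact h
          · rcases (hones k).1 h with rfl | rfl
            · exact absurd hk (hiN k)
            · exact absurd hk hjNi
        · exact Set.indicator_of_notMem hk x
      have := hxc i
      rw [hzero, (hones i).2 (Or.inl rfl)] at this
      linarith
    · intro x hx
      obtain ⟨hb, hcard⟩ := hH x hx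
      obtain ⟨i, j, hij, hset⟩ := Set.ncard_eq_two.mp hcard
      have hones : ∀ k, x k = 1 ↔ (k = i ∨ k = j) := by
        intro k
        have := Set.ext_iff.mp hset k
        simpa using this
      have hxeq : x = Pi.single i 1 + Pi.single j 1 := eq_single_add_single hb hij hones
      have hjNi : j ∈ N i := by
        rw [hN]
        exact ⟨hij, hxeq ▸ hx⟩
      have hiNj : i ∈ N j := by
        rw [hN]
        refine ⟨hij.symm, ?_⟩
        rw [add_comm]
        exact hxeq ▸ hx
      have hx0 : ∀ k, 0 ≤ x k := by
        intro k; rcases hb k with h | h <;> rw [h] <;> norm_num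
      refine ⟨⟨hx0, ?_, ?_⟩, hb⟩
      · -- sum = 2
        have hfe : Finset.univ.filter (fun k => x k = 1) = {i, j} := by
          ext k
          simp [hones k]
        rw [← Finset.sum_subset (Finset.subset_univ (Finset.univ.filter (fun k => x k = 1)))
          (fun k _ hk => by
            rcases hb k with h | h
            · exact h
            · exact absurd (Finset.mem_filter.mpr ⟨Finset.mem_univ k, h⟩) hk)]
        rw [Finset.sum_congr rfl (fun k hk => (Finset.mem_filter.mp hk).2), hfe]
        rw [Finset.sum_const, Finset.card_pair hij]
        norm_num
      · intro k
        have hnn : ∀ m ∈ Finset.univ, (0:ℝ) ≤ (N k).indicator x m :=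
          fun m _ => Set.indicator_nonneg (fun a _ => hx0 a) m
        rcases hb k with h | h
        · rw [h]
          exact Finset.sum_nonneg hnn
        · rcases (hones k).1 h with rfl | rfl
          · have := Finset.single_le_sum hnn (Finset.mem_univ j)
            rw [Set.indicator_of_mem hjNi, (hones j).2 (Or.inr rfl)] at this
            rw [h]; exact this
          · have := Finset.single_le_sum hnn (Finset.mem_univ i)
            rw [Set.indicator_of_mem hiNj, (hones i).2 (Or.inl rfl)] at this
            rw [h]; exact this
end

section
/- There is a constant C such that for every n ≥ 1 and every subset A of the Boolean cube {0,1}^n, there exist a dimension m, a bounded set Q ⊆ ℝ^m cut out by at most ⌈C · 2^n / n⌉ closed halfspaces, and an affine map π : ℝ^m → ℝ^n with π(Q) equal to the convex hull of A. -/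
open Finset Bornology

namespace XC01

variable {n : ℕ} {ι : Type} [Fintype ι]
  {κ δ : ι → Type} [∀ i, Fintype (κ i)] [∀ i, Fintype (δ i)]

/-- coordinate index type -/
abbrev Jty (κ δ : ι → Type) := (Σ i, κ i) ⊕ (Σ i, δ i)

variable (u : ∀ i, κ i → (Fin n → ℝ)) (v : ∀ i, δ i → (Fin n → ℝ))

def pt : Jty κ δ → (Fin n → ℝ)
  | .inl ⟨i, a⟩ => u i a
  | .inr ⟨i, b⟩ => v i b

def Qset (κ δ : ι → Type) [∀ i, Fintype (κ i)] [∀ i, Fintype (δ i)] :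
    Set (Jty κ δ → ℝ) :=
  {y | (∀ j, 0 ≤ y j) ∧ (∀ i, ∑ b, y (.inr ⟨i, b⟩) = ∑ a, y (.inl ⟨i, a⟩)) ∧
    (∑ a : Σ i, κ i, y (.inl a) = 1)}

noncomputable def pmap : (Jty κ δ → ℝ) →ₗ[ℝ] (Fin n → ℝ) :=
  ∑ j : Jty κ δ, (LinearMap.proj j).smulRight (pt u v j)

lemma pmap_apply (y : Jty κ δ → ℝ) : pmap u v y = ∑ j : Jty κ δ, y j • pt u v j := by
  simp [pmap]

def Tset : Set (Fin n → ℝ) := {x | ∃ i a b, x = u i a + v i b}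

lemma convex_Qset : Convex ℝ (Qset κ δ) := by
  rintro y ⟨hy0, hy1, hy2⟩ z ⟨hz0, hz1, hz2⟩ α β hα hβ hαβ
  refine ⟨fun j => ?_, fun i => ?_, ?_⟩
  · have := hy0 j; have := hz0 j
    simp only [Pi.add_apply, Pi.smul_apply, smul_eq_mul]
    nlinarith
  · simp only [Pi.add_apply, Pi.smul_apply, smul_eq_mul,
      Finset.sum_add_distrib, ← Finset.mul_sum, hy1 i, hz1 i]
  · simp only [Pi.add_apply, Pi.smul_apply, smul_eq_mul,
      Finset.sum_add_distrib, ← Finset.mul_sum, hy2, hz2]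
    linarith

lemma bounded_Qset : IsBounded (Qset κ δ) := by
  rw [Metric.isBounded_iff_subset_closedBall 0]
  refine ⟨1, fun y hy => ?_⟩
  obtain ⟨hy0, hy1, hy2⟩ := hy
  have hb : ∀ j, y j ≤ 1 := by
    intro j
    cases j with
    | inl a =>
      calc y (.inl a) ≤ ∑ a' : Σ i, κ i, y (.inl a') :=
            Finset.single_le_sum (f := fun a' => y (Sum.inl a')) (fun _ _ => hy0 _) (mem_univ a)
        _ = 1 := hy2
    | inr b =>
      obtain ⟨i, b⟩ := b
      calc y (.inr ⟨i, b⟩) ≤ ∑ b' : δ i, y (.inr ⟨i, b'⟩) :=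
            Finset.single_le_sum (f := fun b' => y (Sum.inr ⟨i, b'⟩)) (fun _ _ => hy0 _) (mem_univ b)
        _ = ∑ a : κ i, y (.inl ⟨i, a⟩) := hy1 i
        _ ≤ ∑ a' : Σ i, κ i, y (.inl a') := by
            rw [← Finset.univ_sigma_univ, Finset.sum_sigma]
            exact Finset.single_le_sum
              (f := fun i' => ∑ a : κ i', y (Sum.inl ⟨i', a⟩))
              (fun _ _ => Finset.sum_nonneg fun _ _ => hy0 _) (mem_univ i)
        _ = 1 := hy2
  simp only [Metric.mem_closedBall, dist_zero_right]
  rw [pi_norm_le_iff_of_nonneg zero_le_one]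
  intro j
  rw [Real.norm_eq_abs, abs_le]
  exact ⟨by linarith [hy0 j], hb j⟩


lemma image_pmap [∀ i, Nonempty (κ i)] [∀ i, Nonempty (δ i)] :
    (pmap u v) '' Qset κ δ = convexHull ℝ (Tset u v) := by
  classical
  apply Set.Subset.antisymm
  · rintro _ ⟨y, ⟨hy0, hy1, hy2⟩, rfl⟩
    set lam : ι → ℝ := fun i => ∑ a : κ i, y (.inl ⟨i, a⟩) with hlam
    have hlam0 : ∀ i, 0 ≤ lam i := fun i => Finset.sum_nonneg fun _ _ => hy0 _
    have hlamsum : ∑ i, lam i = 1 := by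
      rw [← hy2, ← Finset.univ_sigma_univ, Finset.sum_sigma]
    set P : Finset ι := univ.filter (fun i => lam i ≠ 0) with hP
    have hPsum : ∑ i ∈ P, lam i = 1 := by
      rw [hP, Finset.sum_filter_of_ne (fun x _ h => h), hlamsum]
    set ph : ι → (Fin n → ℝ) := fun i => ∑ a : κ i, y (.inl ⟨i, a⟩) • u i a with hph
    set qh : ι → (Fin n → ℝ) := fun i => ∑ b : δ i, y (.inr ⟨i, b⟩) • v i b with hqh
    have hsplit : pmap u v y = ∑ i, (ph i + qh i) := by
      rw [pmap_apply, Fintype.sum_sum_type, ← Finset.univ_sigma_univ, Finset.sum_sigma,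
        ← Finset.univ_sigma_univ, Finset.sum_sigma, ← Finset.sum_add_distrib]
      rfl
    have hzero : ∀ i ∈ univ, i ∉ P → ph i + qh i = 0 := by
      intro i _ hiP
      have hl : lam i = 0 := by
        by_contra h; exact hiP (by simp [hP, h])
      have hA : ∀ a : κ i, y (.inl ⟨i, a⟩) = 0 := by
        have := (Finset.sum_eq_zero_iff_of_nonneg (fun a _ => hy0 (Sum.inl ⟨i, a⟩))).mp hl
        exact fun a => this a (mem_univ a)
      have hB : ∀ b : δ i, y (.inr ⟨i, b⟩) = 0 := by
        have h1 : ∑ b : δ i, y (.inr ⟨i, b⟩) = 0 := by rw [hy1 i]; exact hl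
        have := (Finset.sum_eq_zero_iff_of_nonneg (fun b _ => hy0 (Sum.inr ⟨i, b⟩))).mp h1
        exact fun b => this b (mem_univ b)
      simp [hph, hqh, hA, hB]
    have hsplit2 : pmap u v y = ∑ i ∈ P, (lam i • (lam i)⁻¹ • (ph i + qh i)) := by
      rw [hsplit, ← Finset.sum_subset (Finset.subset_univ P) hzero]
      apply Finset.sum_congr rfl
      intro i hi
      rw [smul_inv_smul₀ (by simpa [hP] using hi)]
    rw [hsplit2]
    apply (convex_convexHull ℝ (Tset u v)).sum_mem (fun i _ => hlam0 i) hPsum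
    intro i hiP
    have hli : lam i ≠ 0 := by simpa [hP] using hiP
    have hlpos : 0 < lam i := lt_of_le_of_ne (hlam0 i) (Ne.symm hli)
    -- r i := (lam i)⁻¹ • (ph i + qh i) ∈ convexHull T
    set c : κ i → ℝ := fun a => (lam i)⁻¹ * y (.inl ⟨i, a⟩) with hc
    set d : δ i → ℝ := fun b => (lam i)⁻¹ * y (.inr ⟨i, b⟩) with hd
    have hcs : ∑ a, c a = 1 := by
      rw [hc, ← Finset.mul_sum]; exact inv_mul_cancel₀ hli
    have hds : ∑ b, d b = 1 := by
      rw [hd, ← Finset.mul_sum, hy1 i]; exact inv_mul_cancel₀ hli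
    have key : (lam i)⁻¹ • (ph i + qh i)
        = ∑ ab : κ i × δ i, (c ab.1 * d ab.2) • (u i ab.1 + v i ab.2) := by
      rw [Fintype.sum_prod_type]
      have e1 : ∀ a, ∑ b, (c a * d b) • (u i a + v i b)
          = (c a • u i a) + ∑ b, (c a * d b) • v i b := by
        intro a
        simp only [smul_add, Finset.sum_add_distrib]
        congr 1
        rw [← Finset.sum_smul, ← Finset.mul_sum, hds, mul_one]
      simp only [e1]
      rw [Finset.sum_add_distrib, Finset.sum_comm]
      have e2 : ∀ b, ∑ a, (c a * d b) • v i b = d b • v i b := by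
        intro b
        rw [← Finset.sum_smul, ← Finset.sum_mul, hcs, one_mul]
      simp only [e2]
      rw [smul_add]
      congr 1
      · rw [hph, Finset.smul_sum]
        apply Finset.sum_congr rfl
        intro a _
        rw [hc, smul_smul]
      · rw [hqh, Finset.smul_sum]
        apply Finset.sum_congr rfl
        intro b _
        rw [hd, smul_smul]
    rw [key]
    apply (convex_convexHull ℝ (Tset u v)).sum_mem
    · intro ab _
      have : 0 ≤ (lam i)⁻¹ := le_of_lt (inv_pos.mpr hlpos)
      exact mul_nonneg (mul_nonneg this (hy0 _)) (mul_nonneg this (hy0 _))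
    · rw [Fintype.sum_prod_type]
      simp only [← Finset.mul_sum, hds, mul_one]
      exact hcs
    · intro ab _
      exact subset_convexHull ℝ _ ⟨i, ab.1, ab.2, rfl⟩
  · apply convexHull_min
    · rintro x ⟨i, a, b, rfl⟩
      refine ⟨(fun j => (if j = .inl ⟨i, a⟩ then 1 else 0) + (if j = .inr ⟨i, b⟩ then 1 else 0)),
        ⟨?_, ?_, ?_⟩, ?_⟩
      · intro j; positivity
      · intro i'
        by_cases h : i' = i
        · subst h
          simp [Sigma.mk.inj_iff, Finset.sum_ite_eq']
        · simp [Sigma.mk.inj_iff, h]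
      · simp [Sigma.mk.inj_iff, Finset.sum_ite_eq']
      · rw [pmap_apply]
        simp only [add_smul, ite_smul, one_smul, zero_smul, Finset.sum_add_distrib,
          Finset.sum_ite_eq', mem_univ, if_pos]
        simp [pt]
    · exact (convex_Qset).linear_image _

abbrev Cty (κ δ : ι → Type) := Jty κ δ ⊕ ((ι ⊕ ι) ⊕ Bool)

open Classical in
noncomputable def cmat : Cty κ δ → Jty κ δ → ℝ
  | .inl j => fun j' => if j' = j then -1 else 0
  | .inr (.inl (.inl i)) => fun j' =>
      match j' with
      | .inl ⟨i', _⟩ => if i' = i then -1 else 0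
      | .inr ⟨i', _⟩ => if i' = i then 1 else 0
  | .inr (.inl (.inr i)) => fun j' =>
      match j' with
      | .inl ⟨i', _⟩ => if i' = i then 1 else 0
      | .inr ⟨i', _⟩ => if i' = i then -1 else 0
  | .inr (.inr true) => fun j' => match j' with | .inl _ => 1 | .inr _ => 0
  | .inr (.inr false) => fun j' => match j' with | .inl _ => -1 | .inr _ => 0

noncomputable def dvec : Cty κ δ → ℝ
  | .inl _ => 0
  | .inr (.inl _) => 0
  | .inr (.inr true) => 1
  | .inr (.inr false) => -1

lemma qset_halfspaces :
    Qset κ δ = {y | ∀ i : Cty κ δ, ∑ j, cmat i j * y j ≤ dvec i} := by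
  classical
  have hsig : ∀ (w : Jty κ δ → ℝ) (i : ι) (r : ℝ),
      (∑ a : Σ i', κ i', (if a.1 = i then r else 0) * w (.inl a))
        = r * ∑ a : κ i, w (.inl ⟨i, a⟩) := by
    intro w i r
    rw [← Finset.univ_sigma_univ, Finset.sum_sigma]
    rw [Finset.sum_eq_single i]
    · rw [Finset.mul_sum]
      apply Finset.sum_congr rfl
      intro a _
      simp
    · intro i' _ hne
      apply Finset.sum_eq_zero
      intro a _
      simp [hne]
    · simp
  have hsig' : ∀ (w : Jty κ δ → ℝ) (i : ι) (r : ℝ),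
      (∑ b : Σ i', δ i', (if b.1 = i then r else 0) * w (.inr b))
        = r * ∑ b : δ i, w (.inr ⟨i, b⟩) := by
    intro w i r
    rw [← Finset.univ_sigma_univ, Finset.sum_sigma]
    rw [Finset.sum_eq_single i]
    · rw [Finset.mul_sum]
      apply Finset.sum_congr rfl
      intro b _
      simp
    · intro i' _ hne
      apply Finset.sum_eq_zero
      intro b _
      simp [hne]
    · simp
  ext y
  simp only [Qset, Set.mem_setOf_eq]
  constructor
  · rintro ⟨h0, h1, h2⟩ i
    match i with
    | .inl j =>
      have : ∑ j', cmat (κ := κ) (δ := δ) (.inl j) j' * y j' = -y j := by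
        simp only [cmat, ite_mul, neg_one_mul, zero_mul]
        rw [Finset.sum_ite_eq' Finset.univ j (fun j' => -y j')]
        simp
      rw [this, dvec]
      simpa using h0 j
    | .inr (.inl (.inl i)) =>
      have : ∑ j', cmat (κ := κ) (δ := δ) (.inr (.inl (.inl i))) j' * y j'
          = (∑ b : δ i, y (.inr ⟨i, b⟩)) - ∑ a : κ i, y (.inl ⟨i, a⟩) := by
        rw [Fintype.sum_sum_type]
        have e1 : ∀ a : Σ i', κ i', cmat (κ := κ) (δ := δ) (.inr (.inl (.inl i))) (.inl a)
            = (if a.1 = i then (-1:ℝ) else 0) := by rintro ⟨i', a⟩; rfl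
        have e2 : ∀ b : Σ i', δ i', cmat (κ := κ) (δ := δ) (.inr (.inl (.inl i))) (.inr b)
            = (if b.1 = i then (1:ℝ) else 0) := by rintro ⟨i', b⟩; rfl
        simp only [e1, e2, hsig, hsig']
        ring
      rw [this, dvec, h1 i]
      simp
    | .inr (.inl (.inr i)) =>
      have : ∑ j', cmat (κ := κ) (δ := δ) (.inr (.inl (.inr i))) j' * y j'
          = (∑ a : κ i, y (.inl ⟨i, a⟩)) - ∑ b : δ i, y (.inr ⟨i, b⟩) := by
        rw [Fintype.sum_sum_type]
        have e1 : ∀ a : Σ i', κ i', cmat (κ := κ) (δ := δ) (.inr (.inl (.inr i))) (.inl a)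
            = (if a.1 = i then (1:ℝ) else 0) := by rintro ⟨i', a⟩; rfl
        have e2 : ∀ b : Σ i', δ i', cmat (κ := κ) (δ := δ) (.inr (.inl (.inr i))) (.inr b)
            = (if b.1 = i then (-1:ℝ) else 0) := by rintro ⟨i', b⟩; rfl
        simp only [e1, e2, hsig, hsig']
        ring
      rw [this, dvec, h1 i]
      simp
    | .inr (.inr true) =>
      have : ∑ j', cmat (κ := κ) (δ := δ) (.inr (.inr true)) j' * y j'
          = ∑ a : Σ i', κ i', y (.inl a) := by
        rw [Fintype.sum_sum_type]
        have e1 : ∀ a : Σ i', κ i', cmat (κ := κ) (δ := δ) (.inr (.inr true)) (.inl a) = (1:ℝ) :=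
          by rintro ⟨i', a⟩; rfl
        have e2 : ∀ b : Σ i', δ i', cmat (κ := κ) (δ := δ) (.inr (.inr true)) (.inr b) = (0:ℝ) :=
          by rintro ⟨i', b⟩; rfl
        simp [e1, e2]
      rw [this, dvec, h2]
    | .inr (.inr false) =>
      have : ∑ j', cmat (κ := κ) (δ := δ) (.inr (.inr false)) j' * y j'
          = -∑ a : Σ i', κ i', y (.inl a) := by
        rw [Fintype.sum_sum_type]
        have e1 : ∀ a : Σ i', κ i', cmat (κ := κ) (δ := δ) (.inr (.inr false)) (.inl a) = (-1:ℝ) :=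
          by rintro ⟨i', a⟩; rfl
        have e2 : ∀ b : Σ i', δ i', cmat (κ := κ) (δ := δ) (.inr (.inr false)) (.inr b) = (0:ℝ) :=
          by rintro ⟨i', b⟩; rfl
        simp [e1, e2]
      rw [this, dvec, h2]
  · intro h
    refine ⟨?_, ?_, ?_⟩
    · intro j
      have := h (.inl j)
      have hj : ∑ j', cmat (κ := κ) (δ := δ) (.inl j) j' * y j' = -y j := by
        simp only [cmat, ite_mul, neg_one_mul, zero_mul]
        rw [Finset.sum_ite_eq' Finset.univ j (fun j' => -y j')]
        simp
      rw [hj, dvec] at this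
      linarith
    · intro i
      have hA := h (.inr (.inl (.inl i)))
      have hB := h (.inr (.inl (.inr i)))
      have eA : ∑ j', cmat (κ := κ) (δ := δ) (.inr (.inl (.inl i))) j' * y j'
          = (∑ b : δ i, y (.inr ⟨i, b⟩)) - ∑ a : κ i, y (.inl ⟨i, a⟩) := by
        rw [Fintype.sum_sum_type]
        have e1 : ∀ a : Σ i', κ i', cmat (κ := κ) (δ := δ) (.inr (.inl (.inl i))) (.inl a)
            = (if a.1 = i then (-1:ℝ) else 0) := by rintro ⟨i', a⟩; rfl
        have e2 : ∀ b : Σ i', δ i', cmat (κ := κ) (δ := δ) (.inr (.inl (.inl i))) (.inr b)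
            = (if b.1 = i then (1:ℝ) else 0) := by rintro ⟨i', b⟩; rfl
        simp only [e1, e2, hsig, hsig']
        ring
      have eB : ∑ j', cmat (κ := κ) (δ := δ) (.inr (.inl (.inr i))) j' * y j'
          = (∑ a : κ i, y (.inl ⟨i, a⟩)) - ∑ b : δ i, y (.inr ⟨i, b⟩) := by
        rw [Fintype.sum_sum_type]
        have e1 : ∀ a : Σ i', κ i', cmat (κ := κ) (δ := δ) (.inr (.inl (.inr i))) (.inl a)
            = (if a.1 = i then (1:ℝ) else 0) := by rintro ⟨i', a⟩; rfl
        have e2 : ∀ b : Σ i', δ i', cmat (κ := κ) (δ := δ) (.inr (.inl (.inr i))) (.inr b)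
            = (if b.1 = i then (-1:ℝ) else 0) := by rintro ⟨i', b⟩; rfl
        simp only [e1, e2, hsig, hsig']
        ring
      rw [eA, dvec] at hA
      rw [eB, dvec] at hB
      linarith
    · have hA := h (.inr (.inr true))
      have hB := h (.inr (.inr false))
      have eA : ∑ j', cmat (κ := κ) (δ := δ) (.inr (.inr true)) j' * y j'
          = ∑ a : Σ i', κ i', y (.inl a) := by
        rw [Fintype.sum_sum_type]
        have e1 : ∀ a : Σ i', κ i', cmat (κ := κ) (δ := δ) (.inr (.inr true)) (.inl a) = (1:ℝ) :=
          by rintro ⟨i', a⟩; rfl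
        have e2 : ∀ b : Σ i', δ i', cmat (κ := κ) (δ := δ) (.inr (.inr true)) (.inr b) = (0:ℝ) :=
          by rintro ⟨i', b⟩; rfl
        simp [e1, e2]
      have eB : ∑ j', cmat (κ := κ) (δ := δ) (.inr (.inr false)) j' * y j'
          = -∑ a : Σ i', κ i', y (.inl a) := by
        rw [Fintype.sum_sum_type]
        have e1 : ∀ a : Σ i', κ i', cmat (κ := κ) (δ := δ) (.inr (.inr false)) (.inl a) = (-1:ℝ) :=
          by rintro ⟨i', a⟩; rfl
        have e2 : ∀ b : Σ i', δ i', cmat (κ := κ) (δ := δ) (.inr (.inr false)) (.inr b) = (0:ℝ) :=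
          by rintro ⟨i', b⟩; rfl
        simp [e1, e2]
      rw [eA, dvec] at hA
      rw [eB, dvec] at hB
      linarith

/-- generic transfer from arbitrary finite index types to `Fin`-indexed CutOutBy data. -/
lemma transfer {J ιc : Type} [Fintype J] [Fintype ιc] (c : ιc → J → ℝ) (d : ιc → ℝ)
    (π : (J → ℝ) →ₗ[ℝ] (Fin n → ℝ)) :
    ∃ (Q : Set (Fin (Fintype.card J) → ℝ))
      (π' : (Fin (Fintype.card J) → ℝ) →ᵃ[ℝ] (Fin n → ℝ)),
      CutOutBy Q (Fintype.card ιc) ∧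
      (IsBounded {y : J → ℝ | ∀ i, ∑ j, c i j * y j ≤ d i} → IsBounded Q) ∧
      π' '' Q = ⇑π '' {y : J → ℝ | ∀ i, ∑ j, c i j * y j ≤ d i} := by
  classical
  set e := Fintype.equivFin J
  set f := Fintype.equivFin ιc
  set Qj : Set (J → ℝ) := {y | ∀ i, ∑ j, c i j * y j ≤ d i} with hQj
  set R : (Fin (Fintype.card J) → ℝ) →ₗ[ℝ] (J → ℝ) := LinearMap.funLeft ℝ ℝ e with hR
  have hRapp : ∀ (x : Fin (Fintype.card J) → ℝ) (j : J), R x j = x (e j) := fun _ _ => rfl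
  have hRsurj : Function.Surjective R := by
    intro y
    exact ⟨fun j' => y (e.symm j'), by funext j; simp [hRapp]⟩
  refine ⟨R ⁻¹' Qj, (π.comp R).toAffineMap, ?_, ?_, ?_⟩
  · refine ⟨fun i' j' => c (f.symm i') (e.symm j'), fun i' => d (f.symm i'), ?_⟩
    ext x
    simp only [Set.mem_preimage, hQj, Set.mem_setOf_eq]
    have key : ∀ i : ιc, (∑ j' , c i (e.symm j') * x j') = ∑ j, c i j * R x j := by
      intro i
      rw [← Equiv.sum_comp e.symm (fun j => c i j * R x (j))]
      apply Finset.sum_congr rfl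
      intro j' _
      rw [hRapp]
      simp
    constructor
    · intro h i'
      rw [key]
      exact h _
    · intro h i
      have := h (f i)
      rw [key] at this
      simpa using this
  · intro hb
    rw [isBounded_iff_forall_norm_le] at hb ⊢
    obtain ⟨C, hC⟩ := hb
    refine ⟨max C 0, fun x hx => ?_⟩
    rw [pi_norm_le_iff_of_nonneg (le_max_right C 0)]
    intro j'
    have h1 : x j' = R x (e.symm j') := by rw [hRapp]; simp
    calc ‖x j'‖ = ‖R x (e.symm j')‖ := by rw [h1]
      _ ≤ ‖R x‖ := norm_le_pi_norm _ _
      _ ≤ C := hC _ hx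
      _ ≤ max C 0 := le_max_left C 0
  · rw [LinearMap.coe_toAffineMap, LinearMap.coe_comp, Set.image_comp]
    rw [Set.image_preimage_eq Qj hRsurj]


variable (n t : ℕ)

noncomputable def lo (x : Fin n → ℝ) : Fin n → ℝ := fun i => if (i : ℕ) < n - t then x i else 0
noncomputable def hi (x : Fin n → ℝ) : Fin n → ℝ := fun i => if (i : ℕ) < n - t then 0 else x i

lemma lo_add_hi (x : Fin n → ℝ) : lo n t x + hi n t x = x := by
  funext i; by_cases h : (i : ℕ) < n - t <;> simp [lo, hi, h]

def HiForm (w : Fin n → ℝ) : Prop :=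
  (∀ i : Fin n, (i : ℕ) < n - t → w i = 0) ∧ ∀ i, w i = 0 ∨ w i = 1
def LoForm (σ : Fin n → ℝ) : Prop :=
  (∀ i : Fin n, ¬((i : ℕ) < n - t) → σ i = 0) ∧ ∀ i, σ i = 0 ∨ σ i = 1

lemma hiForm_hi {x} (hx : x ∈ booleanCube n) : HiForm n t (hi n t x) := by
  constructor
  · intro i h; simp [hi, h]
  · intro i
    by_cases h : (i : ℕ) < n - t
    · left; simp [hi, h]
    · simpa [hi, h] using hx i

lemma loForm_lo {x} (hx : x ∈ booleanCube n) : LoForm n t (lo n t x) := by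
  constructor
  · intro i h; simp [lo, h]
  · intro i
    by_cases h : (i : ℕ) < n - t
    · simpa [lo, h] using hx i
    · left; simp [lo, h]

lemma apply_fin_congr {α : Type*} (w : Fin n → α) {m : ℕ} (hm : m < n) {i : Fin n}
    (h : m = (i : ℕ)) : w ⟨m, hm⟩ = w i := congrArg w (Fin.ext h)

variable (ht : t ≤ n)

noncomputable def bvec (w : Fin n → ℝ) : Fin t → Bool :=
  fun j => decide (w ⟨n - t + (j : ℕ), by have := j.isLt; omega⟩ = 1)

noncomputable def wvec (b : Fin t → Bool) : Fin n → ℝ :=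
  fun i => if h : (i : ℕ) < n - t then 0
    else (if b ⟨(i : ℕ) - (n - t), by have := i.isLt; omega⟩ then 1 else 0)

noncomputable def bvecLo (σ : Fin n → ℝ) : Fin (n - t) → Bool :=
  fun j => decide (σ (Fin.castLE (Nat.sub_le n t) j) = 1)

lemma wvec_bvec {w} (hw : HiForm n t w) : wvec n t ht (bvec n t ht w) = w := by
  funext i
  by_cases h : (i : ℕ) < n - t
  · simp [wvec, h, hw.1 i h]
  · simp only [wvec, dif_neg h, bvec]
    have hwe : w ⟨n - t + ((i : ℕ) - (n - t)), by have := i.isLt; omega⟩ = w i :=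
      apply_fin_congr n w _ (by have := i.isLt; omega)
    simp only [hwe]
    rcases hw.2 i with h0 | h1
    · simp [h0]
    · simp [h1]

lemma hi_inj {w w'} (hw : HiForm n t w) (hw' : HiForm n t w')
    (h : bvec n t ht w = bvec n t ht w') : w = w' := by
  rw [← wvec_bvec n t ht hw, ← wvec_bvec n t ht hw', h]

lemma lo_inj {σ σ'} (hσ : LoForm n t σ) (hσ' : LoForm n t σ')
    (h : bvecLo n t σ = bvecLo n t σ') : σ = σ' := by
  funext i
  by_cases hl : (i : ℕ) < n - t
  · have hj := congrFun h ⟨(i : ℕ), hl⟩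
    simp only [bvecLo] at hj
    have hc : Fin.castLE (Nat.sub_le n t) (⟨(i : ℕ), hl⟩ : Fin (n - t)) = i := Fin.ext rfl
    rw [hc] at hj
    rcases hσ.2 i with h0 | h1 <;> rcases hσ'.2 i with h0' | h1' <;> simp_all
  · rw [hσ.1 i hl, hσ'.1 i hl]

lemma inst (n t : ℕ) (ht : t ≤ n) (A : Set (Fin n → ℝ)) (hA : A ⊆ booleanCube n) :
    ∃ (m k : ℕ) (Q : Set (Fin m → ℝ)) (π : (Fin m → ℝ) →ᵃ[ℝ] (Fin n → ℝ)),
      k ≤ 2 ^ (n - t) + 2 ^ 2 ^ t * 2 ^ t + 2 * 2 ^ 2 ^ t + 2 ∧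
      IsBounded Q ∧ CutOutBy Q k ∧ π '' Q = convexHull ℝ A := by
  classical
  have hcube_fin : (booleanCube n).Finite := by
    apply Set.Finite.subset (Set.finite_range
      (fun b : Fin n → Bool => fun i => if b i then (1 : ℝ) else 0))
    intro x hx
    refine ⟨fun i => decide (x i = 1), ?_⟩
    funext i
    rcases hx i with h | h <;> simp [h]
  have hAfin : A.Finite := hcube_fin.subset hA
  set Af : Finset (Fin n → ℝ) := hAfin.toFinset with hAfdef
  have hAfmem : ∀ x, x ∈ Af ↔ x ∈ A := fun x => hAfin.mem_toFinset
  set S : Finset (Fin n → ℝ) := Af.image (lo n t) with hSdef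
  set fib : (Fin n → ℝ) → Finset (Fin n → ℝ) :=
    fun σ => (Af.filter (fun x => lo n t x = σ)).image (hi n t) with hfibdef
  set ffam : Finset (Finset (Fin n → ℝ)) := S.image fib with hffamdef
  set Sf : Finset (Fin n → ℝ) → Finset (Fin n → ℝ) :=
    fun F => S.filter (fun σ => fib σ = F) with hSfdef
  haveI hk1 : ∀ F : {F // F ∈ ffam}, Nonempty {σ // σ ∈ Sf F.1} := by
    rintro ⟨F, hF⟩
    rw [Finset.nonempty_coe_sort]
    obtain ⟨σ, hσS, hσF⟩ := Finset.mem_image.mp hF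
    exact ⟨σ, Finset.mem_filter.mpr ⟨hσS, hσF⟩⟩
  haveI hk2 : ∀ F : {F // F ∈ ffam}, Nonempty {w // w ∈ F.1} := by
    rintro ⟨F, hF⟩
    rw [Finset.nonempty_coe_sort]
    obtain ⟨σ, hσS, hσF⟩ := Finset.mem_image.mp hF
    obtain ⟨x, hxAf, hxlo⟩ := Finset.mem_image.mp hσS
    refine ⟨hi n t x, ?_⟩
    show hi n t x ∈ F
    rw [← hσF]
    exact Finset.mem_image.mpr ⟨x, Finset.mem_filter.mpr ⟨hxAf, hxlo⟩, rfl⟩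
  set u : ∀ F : {F // F ∈ ffam}, {σ // σ ∈ Sf F.1} → (Fin n → ℝ) := fun _ a => a.1 with hudef
  set v : ∀ F : {F // F ∈ ffam}, {w // w ∈ F.1} → (Fin n → ℝ) := fun _ b => b.1 with hvdef
  have hT : Tset u v = A := by
    ext x
    constructor
    · rintro ⟨F, a, b, rfl⟩
      obtain ⟨haS, hafib⟩ := Finset.mem_filter.mp a.2
      have hbF : (b : Fin n → ℝ) ∈ fib a.1 := by rw [hafib]; exact b.2
      obtain ⟨x', hx'filter, hx'hi⟩ := Finset.mem_image.mp hbF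
      obtain ⟨hx'A, hx'lo⟩ := Finset.mem_filter.mp hx'filter
      have hsum : u F a + v F b = x' := by
        show a.1 + b.1 = x'
        rw [← hx'lo, ← hx'hi]
        exact lo_add_hi n t x'
      rw [hsum]
      exact (hAfmem x').mp hx'A
    · intro hx
      have hxAf : x ∈ Af := (hAfmem x).mpr hx
      have hloS : lo n t x ∈ S := Finset.mem_image_of_mem _ hxAf
      have hFmem : fib (lo n t x) ∈ ffam := Finset.mem_image_of_mem _ hloS
      refine ⟨⟨fib (lo n t x), hFmem⟩, ⟨lo n t x, ?_⟩, ⟨hi n t x, ?_⟩, ?_⟩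
      · exact Finset.mem_filter.mpr ⟨hloS, rfl⟩
      · exact Finset.mem_image.mpr ⟨x, Finset.mem_filter.mpr ⟨hxAf, rfl⟩, rfl⟩
      · exact (lo_add_hi n t x).symm
  -- element shape facts
  have hSLo : ∀ σ ∈ S, LoForm n t σ := by
    intro σ hσ
    obtain ⟨x, hxAf, rfl⟩ := Finset.mem_image.mp hσ
    exact loForm_lo n t (hA ((hAfmem x).mp hxAf))
  have hHiF : ∀ F ∈ ffam, ∀ w ∈ F, HiForm n t w := by
    intro F hF w hw
    obtain ⟨σ, hσS, rfl⟩ := Finset.mem_image.mp hF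
    obtain ⟨x, hxf, rfl⟩ := Finset.mem_image.mp hw
    exact hiForm_hi n t (hA ((hAfmem x).mp (Finset.mem_filter.mp hxf).1))
  -- cardinality bounds
  have hS1 : ∑ F ∈ ffam, (Sf F).card = S.card :=
    (Finset.card_eq_sum_card_fiberwise (fun σ hσ => Finset.mem_image_of_mem fib hσ)).symm
  have hS2 : S.card ≤ 2 ^ (n - t) := by
    have hle := Finset.card_le_card_of_injOn (bvecLo n t)
      (fun σ _ => Finset.mem_univ _)
      (fun σ hσ σ' hσ' h =>
        lo_inj n t (hSLo σ (Finset.mem_coe.mp hσ)) (hSLo σ' (Finset.mem_coe.mp hσ')) h)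
    calc S.card ≤ (Finset.univ : Finset (Fin (n - t) → Bool)).card := hle
      _ = 2 ^ (n - t) := by simp [Finset.card_univ]
  have hFcard : ∀ F ∈ ffam, F.card ≤ 2 ^ t := by
    intro F hF
    have hle := Finset.card_le_card_of_injOn (bvec n t ht)
      (fun w _ => Finset.mem_univ _)
      (fun w hw w' hw' h =>
        hi_inj n t ht (hHiF F hF w (Finset.mem_coe.mp hw))
          (hHiF F hF w' (Finset.mem_coe.mp hw')) h)
    calc F.card ≤ (Finset.univ : Finset (Fin t → Bool)).card := hle
      _ = 2 ^ t := by simp [Finset.card_univ]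
  have hff : ffam.card ≤ 2 ^ 2 ^ t := by
    have hinj : Set.InjOn (fun F => fun b : Fin t → Bool => decide (wvec n t ht b ∈ F))
        (↑ffam : Set (Finset (Fin n → ℝ))) := by
      intro F hF G hG h
      ext w
      have key : ∀ (X Y : Finset (Fin n → ℝ)), X ∈ ffam →
          ((fun b : Fin t → Bool => decide (wvec n t ht b ∈ X)) =
            fun b => decide (wvec n t ht b ∈ Y)) → w ∈ X → w ∈ Y := by
        intro X Y hX hXY hw
        have h1 : wvec n t ht (bvec n t ht w) = w :=
          wvec_bvec n t ht (hHiF X hX w hw)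
        have h2 := congrFun hXY (bvec n t ht w)
        rw [h1] at h2
        exact (decide_eq_decide.mp h2).mp hw
      exact ⟨key F G (Finset.mem_coe.mp hF) h,
        key G F (Finset.mem_coe.mp hG) h.symm⟩
    have hle := Finset.card_le_card_of_injOn
      (fun F => fun b : Fin t → Bool => decide (wvec n t ht b ∈ F))
      (fun F _ => Finset.mem_univ _) hinj
    calc ffam.card ≤ (Finset.univ : Finset ((Fin t → Bool) → Bool)).card := hle
      _ = 2 ^ 2 ^ t := by simp [Finset.card_univ]
  have hsumF : ∑ F ∈ ffam, F.card ≤ 2 ^ 2 ^ t * 2 ^ t := by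
    calc ∑ F ∈ ffam, F.card ≤ ffam.card • 2 ^ t := Finset.sum_le_card_nsmul _ _ _ hFcard
      _ = ffam.card * 2 ^ t := by rw [smul_eq_mul]
      _ ≤ 2 ^ 2 ^ t * 2 ^ t := Nat.mul_le_mul_right _ hff
  -- apply the machinery
  have himg := image_pmap u v
  have hhalf := qset_halfspaces (κ := fun F : {F // F ∈ ffam} => {σ // σ ∈ Sf F.1})
      (δ := fun F : {F // F ∈ ffam} => {w // w ∈ F.1})
  obtain ⟨Q, π', hcut, hbdd, himg2⟩ := transfer (n := n) cmat dvec (pmap u v)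
  refine ⟨_, _, Q, π', ?_, ?_, hcut, ?_⟩
  · -- cardinality bound on k
    have hcard : Fintype.card (Cty (fun F : {F // F ∈ ffam} => {σ // σ ∈ Sf F.1})
        (fun F : {F // F ∈ ffam} => {w // w ∈ F.1}))
        = ((∑ F ∈ ffam, (Sf F).card) + ∑ F ∈ ffam, F.card)
          + ((ffam.card + ffam.card) + 2) := by
      simp only [Cty, Jty, Fintype.card_sum, Fintype.card_sigma, Fintype.card_coe,
        Fintype.card_bool]
      rw [Finset.sum_coe_sort ffam (fun F => #(Sf F)), Finset.sum_coe_sort ffam (fun F => #F)]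
    rw [hcard, hS1]
    have h2 : ffam.card + ffam.card ≤ 2 * 2 ^ 2 ^ t := by omega
    linarith
  · apply hbdd
    rw [← hhalf]
    exact bounded_Qset
  · rw [← hhalf] at himg2
    rw [himg2, himg, hT]

lemma two_mul_le_two_pow {t : ℕ} (h : 2 ≤ t) : 2 * t ≤ 2 ^ t := by
  induction t, h using Nat.le_induction with
  | base => norm_num
  | succ s hs ih =>
    have h1 : (1 : ℕ) ≤ 2 ^ s := Nat.one_le_two_pow
    rw [pow_succ]
    linarith

lemma arith (n : ℕ) (hn : 1 ≤ n) :
    ∃ t : ℕ, t ≤ n ∧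
      (2 ^ (n - t) + 2 ^ 2 ^ t * 2 ^ t + 2 * 2 ^ 2 ^ t + 2) * n ≤ 2 ^ (n + 4) := by
  rcases Nat.lt_or_ge n 16 with hn16 | hn16
  · refine ⟨0, Nat.zero_le n, ?_⟩
    norm_num
    interval_cases n <;> norm_num
  · set l := Nat.log 2 n with hldef
    have hl4 : 4 ≤ l := by
      have h16 : (2 : ℕ) ^ 4 ≤ n := by
        calc (2 : ℕ) ^ 4 = 16 := by norm_num
          _ ≤ n := hn16
      exact (Nat.le_log_iff_pow_le (by norm_num) (by omega)).mpr h16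
    have hl1 : 2 ^ l ≤ n := Nat.pow_log_le_self 2 (by omega)
    have hl2 : n < 2 ^ (l + 1) := Nat.lt_pow_succ_log_self (by norm_num) n
    have hln : l < 2 ^ l := Nat.lt_two_pow_self
    refine ⟨l - 2, by omega, ?_⟩
    set t := l - 2 with htdef
    have htl : t + 2 = l := by omega
    have h2t4 : 2 ^ t * 4 ≤ n := by
      calc 2 ^ t * 4 = 2 ^ (t + 2) := by rw [pow_add]; norm_num
        _ = 2 ^ l := by rw [htl]
        _ ≤ n := hl1
    have ht2 : 2 ≤ t := by omega
    have haux : 2 * t ≤ 2 ^ t := two_mul_le_two_pow ht2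
    have h4 : 4 ≤ 2 ^ t := by
      calc (4 : ℕ) = 2 ^ 2 := by norm_num
        _ ≤ 2 ^ t := Nat.pow_le_pow_right (by norm_num) ht2
    have hkey : 2 ^ t + t + 2 ≤ n - t := by
      apply Nat.le_sub_of_add_le
      have h5 : 2 ^ t + t + 2 + t ≤ 2 ^ t * 4 := by linarith
      exact le_trans h5 h2t4
    have hmid : 2 ^ 2 ^ t * 2 ^ t + 2 * 2 ^ 2 ^ t + 2 ≤ 2 ^ (n - t) := by
      have e1 : 2 ^ 2 ^ t * 2 ^ t + 2 * 2 ^ 2 ^ t + 2 ≤ 2 ^ (2 ^ t + t + 2) := by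
        rw [pow_add, pow_add]
        have h1 : (1 : ℕ) ≤ 2 ^ 2 ^ t := Nat.one_le_two_pow
        have h2 : 2 ^ 2 ^ t * 4 ≤ 2 ^ 2 ^ t * 2 ^ t := Nat.mul_le_mul_left _ h4
        have h3 : (2:ℕ) ^ 2 = 4 := by norm_num
        rw [h3]
        linarith
      calc 2 ^ 2 ^ t * 2 ^ t + 2 * 2 ^ 2 ^ t + 2 ≤ 2 ^ (2 ^ t + t + 2) := e1
        _ ≤ 2 ^ (n - t) := Nat.pow_le_pow_right (by norm_num) hkey
    have hfin : 2 ^ (n - t) + 2 ^ 2 ^ t * 2 ^ t + 2 * 2 ^ 2 ^ t + 2 ≤ 2 ^ (n - t) * 2 := by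
      linarith
    calc (2 ^ (n - t) + 2 ^ 2 ^ t * 2 ^ t + 2 * 2 ^ 2 ^ t + 2) * n
        ≤ 2 ^ (n - t) * 2 * n := Nat.mul_le_mul_right n hfin
      _ ≤ 2 ^ (n - t) * 2 * 2 ^ (l + 1) := Nat.mul_le_mul_left _ (le_of_lt hl2)
      _ = 2 ^ ((n - t) + 1 + (l + 1)) := by rw [pow_add, pow_add]; ring
      _ = 2 ^ (n + 4) := by congr 1; omega

end XC01

/-- Every 0/1-polytope in `ℝ^n` has extension complexity `O(2^n / n)`. -/
theorem zero_one_polytope_xc_upper :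
    ∃ C : ℝ, ∀ n : ℕ, 1 ≤ n → ∀ A : Set (Fin n → ℝ), A ⊆ booleanCube n →
      ∃ (m k : ℕ) (Q : Set (Fin m → ℝ)) (π : (Fin m → ℝ) →ᵃ[ℝ] (Fin n → ℝ)),
        k ≤ ⌈C * 2 ^ n / (n : ℝ)⌉₊ ∧
        Bornology.IsBounded Q ∧
        CutOutBy Q k ∧
        π '' Q = convexHull ℝ A := by
  refine ⟨16, fun n hn A hA => ?_⟩
  obtain ⟨t, ht, hbound⟩ := XC01.arith n hn
  obtain ⟨m, k, Q, π, hk, hb, hc, himg⟩ := XC01.inst n t ht A hA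
  refine ⟨m, k, Q, π, ?_, hb, hc, himg⟩
  have hkn : k * n ≤ 2 ^ (n + 4) := le_trans (Nat.mul_le_mul_right n hk) hbound
  have hnpos : (0 : ℝ) < (n : ℝ) := by exact_mod_cast hn
  have h1 : (k : ℝ) ≤ 16 * 2 ^ n / (n : ℝ) := by
    rw [le_div_iff₀ hnpos]
    calc (k : ℝ) * n = ((k * n : ℕ) : ℝ) := by push_cast; ring
      _ ≤ ((2 ^ (n + 4) : ℕ) : ℝ) := by exact_mod_cast hkn
      _ = 16 * 2 ^ n := by push_cast [pow_add]; ring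
  calc k = ⌈(k : ℝ)⌉₊ := (Nat.ceil_natCast k).symm
    _ ≤ ⌈(16 : ℝ) * 2 ^ n / (n : ℝ)⌉₊ := Nat.ceil_mono h1
end

section
/- Let c be a real constant with 1 ≤ c ≤ 2 and C > 0, and suppose that for every m ≥ 1 and every relation E ⊆ Fin m × Fin m, the polytope P_E = conv{(e_i, e_j) ∈ ℝ^m × ℝ^m : (i,j) ∈ E} (the edge polytope of the corresponding bipartite graph) is the image under an affine map of a bounded set cut out by at most C · m^c closed halfspaces. Then there is a constant C' such that for every even n and every subset A of the Boolean cube {0,1}^n, the convex hull of A is the image under an affine map of a bounded set cut out by at most C' · 2^{cn/2} closed halfspaces. -/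
/-- The edge polytope of the bipartite graph on `Fin m ⊕ Fin m` with edge
relation `E ⊆ Fin m × Fin m`: the convex hull of the vectors `(e_i, e_j)`. -/
def edgePolytope (m : ℕ) (E : Set (Fin m × Fin m)) : Set ((Fin m → ℝ) × (Fin m → ℝ)) :=
  convexHull ℝ {p | ∃ ij ∈ E, p = ((Pi.single ij.1 1 : Fin m → ℝ), (Pi.single ij.2 1 : Fin m → ℝ))}

noncomputable section BXC

/-- Linear functional `y ↦ ∑ i, y i * w i`. -/
def bxcDot {m : ℕ} (w : Fin m → ℝ) : (Fin m → ℝ) →ₗ[ℝ] ℝ where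
  toFun y := ∑ i, y i * w i
  map_add' x y := by simp [add_mul, Finset.sum_add_distrib]
  map_smul' r x := by simp [Finset.mul_sum, mul_assoc]

lemma bxcDot_single {m : ℕ} (w : Fin m → ℝ) (i : Fin m) :
    bxcDot w (Pi.single i 1) = w i := by
  simp [bxcDot, Pi.single_apply, Finset.sum_ite_eq']

/-- Decoded boolean vector of an index. -/
def decVec {h : ℕ} (σ : (Fin h → Bool) ≃ Fin (2^h)) (i : Fin (2^h)) : Fin h → ℝ :=
  fun j => if σ.symm i j then 1 else 0

/-- The affine (linear) decoding map. -/
def bigL {h n : ℕ} (hn : n = h + h) (σ : (Fin h → Bool) ≃ Fin (2^h)) :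
    ((Fin (2^h) → ℝ) × (Fin (2^h) → ℝ)) →ₗ[ℝ] (Fin n → ℝ) :=
  LinearMap.pi fun k =>
    Sum.elim
      (fun j => (bxcDot (fun i => decVec σ i j)).comp (LinearMap.fst ℝ _ _))
      (fun j => (bxcDot (fun i => decVec σ i j)).comp (LinearMap.snd ℝ _ _))
      (finSumFinEquiv.symm (Fin.cast hn k))

lemma bigL_vertex {h n : ℕ} (hn : n = h + h) (σ : (Fin h → Bool) ≃ Fin (2^h))
    (i j : Fin (2^h)) (k : Fin n) :
    bigL hn σ ((Pi.single i 1 : Fin (2^h) → ℝ), (Pi.single j 1 : Fin (2^h) → ℝ)) k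
      = Sum.elim (decVec σ i) (decVec σ j) (finSumFinEquiv.symm (Fin.cast hn k)) := by
  unfold bigL
  cases hk : finSumFinEquiv.symm (Fin.cast hn k) with
  | inl j' => simp [LinearMap.pi_apply, hk, bxcDot_single]
  | inr j' => simp [LinearMap.pi_apply, hk, bxcDot_single]

lemma bigL_cube {h n : ℕ} (hn : n = h + h) (σ : (Fin h → Bool) ≃ Fin (2^h))
    (x : Fin n → ℝ) (hx : ∀ i, x i = 0 ∨ x i = 1) :
    bigL hn σ
      ((Pi.single (σ (fun j => decide (x (Fin.cast hn.symm (finSumFinEquiv (Sum.inl j))) = 1))) 1 :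
          Fin (2^h) → ℝ),
       (Pi.single (σ (fun j => decide (x (Fin.cast hn.symm (finSumFinEquiv (Sum.inr j))) = 1))) 1 :
          Fin (2^h) → ℝ)) = x := by
  funext k
  rw [bigL_vertex]
  cases hk : finSumFinEquiv.symm (Fin.cast hn k) with
  | inl j' =>
      have hkk : Fin.cast hn.symm (finSumFinEquiv (Sum.inl j')) = k := by
        rw [← hk, Equiv.apply_symm_apply]; simp
      simp only [Sum.elim_inl, decVec, Equiv.symm_apply_apply, hkk]
      rcases hx k with hxk | hxk <;> simp [hxk]
  | inr j' =>
      have hkk : Fin.cast hn.symm (finSumFinEquiv (Sum.inr j')) = k := by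
        rw [← hk, Equiv.apply_symm_apply]; simp
      simp only [Sum.elim_inr, decVec, Equiv.symm_apply_apply, hkk]
      rcases hx k with hxk | hxk <;> simp [hxk]

end BXC

/-- If every bipartite edge polytope on `2m` vertices has extension complexity
`O(m^c)` with `1 ≤ c ≤ 2`, then every 0/1-polytope in `ℝ^n` (for even `n`) has
extension complexity `O(2^{cn/2})`. -/
theorem bipartite_xc_implies_cube_xc (c C : ℝ) (hc1 : 1 ≤ c) (hc2 : c ≤ 2) (hC : 0 < C)
    (hyp : ∀ m : ℕ, 1 ≤ m → ∀ E : Set (Fin m × Fin m),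
      ∃ (d k : ℕ) (Q : Set (Fin d → ℝ))
        (π : (Fin d → ℝ) →ᵃ[ℝ] ((Fin m → ℝ) × (Fin m → ℝ))),
        (k : ℝ) ≤ C * (m : ℝ) ^ c ∧
        Bornology.IsBounded Q ∧ CutOutBy Q k ∧
        π '' Q = edgePolytope m E) :
    ∃ C' : ℝ, ∀ n : ℕ, Even n → ∀ A : Set (Fin n → ℝ), A ⊆ booleanCube n →
      ∃ (d k : ℕ) (Q : Set (Fin d → ℝ)) (π : (Fin d → ℝ) →ᵃ[ℝ] (Fin n → ℝ)),
        (k : ℝ) ≤ C' * (2 : ℝ) ^ (c * (n : ℝ) / 2) ∧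
        Bornology.IsBounded Q ∧ CutOutBy Q k ∧
        π '' Q = convexHull ℝ A := by
  refine ⟨C, ?_⟩
  rintro n ⟨h, hn⟩ A hA
  set σ : (Fin h → Bool) ≃ Fin (2^h) := Fintype.equivFinOfCardEq (by simp)
  set E : Set (Fin (2^h) × Fin (2^h)) :=
    {ij | bigL hn σ ((Pi.single ij.1 1 : Fin (2^h) → ℝ),
        (Pi.single ij.2 1 : Fin (2^h) → ℝ)) ∈ A} with hE
  obtain ⟨d, k, Q, π, hk, hQb, hQc, hQπ⟩ := hyp (2^h) Nat.one_le_two_pow E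
  refine ⟨d, k, Q, (bigL hn σ).toAffineMap.comp π, ?_, hQb, hQc, ?_⟩
  · calc (k : ℝ) ≤ C * ((2^h : ℕ) : ℝ) ^ c := hk
      _ = C * (2 : ℝ) ^ (c * (n : ℝ) / 2) := by
        congr 1
        push_cast
        rw [← Real.rpow_natCast (2:ℝ) h, ← Real.rpow_mul (by norm_num)]
        congr 1
        have : (n : ℝ) = h + h := by exact_mod_cast congrArg Nat.cast hn
        rw [this]; ring
  · rw [AffineMap.coe_comp, Set.image_comp, hQπ]
    show (bigL hn σ).toAffineMap '' edgePolytope (2^h) E = convexHull ℝ A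
    rw [edgePolytope, AffineMap.image_convexHull]
    congr 1
    ext x
    constructor
    · rintro ⟨p, ⟨ij, hij, rfl⟩, rfl⟩
      exact hij
    · intro hx
      refine ⟨_, ⟨(σ (fun j => decide (x (Fin.cast hn.symm (finSumFinEquiv (Sum.inl j))) = 1)),
        σ (fun j => decide (x (Fin.cast hn.symm (finSumFinEquiv (Sum.inr j))) = 1))), ?_, rfl⟩, ?_⟩
      · show _ ∈ A
        rw [bigL_cube hn σ x (hA hx)]
        exact hx
      · exact bigL_cube hn σ x (hA hx)
end

section
/- Let G be a bipartite graph on vertex set Fin n with parts L and R (so L ∪ R = Fin n, L ∩ R = ∅, and every edge joins L to R), and for i ∈ L let N(i) ⊆ R be its set of neighbours. Define: P_G = conv{e_i + e_j : i adjacent to j in G}; Q_G = {x : Fin n → ℝ | ∀ i ≠ j with i, j non-adjacent, x i + x j ≤ 1}; and R'_G = {x : Fin n → ℝ | (∀ i, 0 ≤ x i) ∧ ∑_{i ∈ L} x i = 1 ∧ ∑_{i ∈ R} x i = 1 ∧ (∀ i ∈ L, x i + ∑_{j ∈ R \ N(i)} x j ≤ 1)}. Then P_G ⊆ R'_G ⊆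 Q_G. -/
/-- For a bipartite graph `G` on `Fin n` with parts `L` and `R`, the polytope `R'_G`
defined by `O(n)` constraints is sandwiched between the edge polytope `P_G` and the
polyhedron `Q_G` given by the non-edge constraints `x_i + x_j ≤ 1`. -/
theorem bipartite_sandwich_polytope (n : ℕ) (G : SimpleGraph (Fin n))
    [DecidableRel G.Adj] (L R : Finset (Fin n))
    (hLR : L ∪ R = Finset.univ) (hdisj : Disjoint L R)
    (hbip : ∀ i j, G.Adj i j → (i ∈ L ∧ j ∈ R) ∨ (i ∈ R ∧ j ∈ L))
    (P : Set (Fin n → ℝ))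
    (hP : P = convexHull ℝ
      {x | ∃ i j, G.Adj i j ∧ x = (Pi.single i 1 + Pi.single j 1 : Fin n → ℝ)})
    (Q : Set (Fin n → ℝ))
    (hQ : Q = {x | ∀ i j, i ≠ j → ¬ G.Adj i j → x i + x j ≤ 1})
    (R' : Set (Fin n → ℝ))
    (hR' : R' = {x | (∀ i, 0 ≤ x i) ∧
      (∑ i ∈ L, x i = 1) ∧ (∑ i ∈ R, x i = 1) ∧
      ∀ i ∈ L, x i + ∑ j ∈ R.filter (fun j => ¬ G.Adj i j), x j ≤ 1}) :
    P ⊆ R' ∧ R' ⊆ Q := by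
  have hmem : ∀ i, i ∉ L → i ∈ R := by
    intro i hi
    have : i ∈ L ∪ R := by rw [hLR]; exact Finset.mem_univ i
    rcases Finset.mem_union.1 this with h | h
    · exact absurd h hi
    · exact h
  have hnotR : ∀ i ∈ L, i ∉ R := fun i hi => Finset.disjoint_left.1 hdisj hi
  constructor
  · -- P ⊆ R'
    rw [hP, hR']
    apply convexHull_min
    · rintro x ⟨i, j, hadj, rfl⟩
      -- WLOG i ∈ L, j ∈ R
      have key : ∀ i j : Fin n, G.Adj i j → i ∈ L → j ∈ R →
          (∀ k, 0 ≤ (Pi.single i 1 + Pi.single j 1 : Fin n → ℝ) k) ∧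
          (∑ k ∈ L, (Pi.single i 1 + Pi.single j 1 : Fin n → ℝ) k = 1) ∧
          (∑ k ∈ R, (Pi.single i 1 + Pi.single j 1 : Fin n → ℝ) k = 1) ∧
          ∀ i' ∈ L, (Pi.single i 1 + Pi.single j 1 : Fin n → ℝ) i' +
            ∑ k ∈ R.filter (fun k => ¬ G.Adj i' k),
              (Pi.single i 1 + Pi.single j 1 : Fin n → ℝ) k ≤ 1 := by
        intro i j hadj hiL hjR
        have hij : i ≠ j := hadj.ne
        have hsum : ∀ s : Finset (Fin n),
            ∑ k ∈ s, (Pi.single i 1 + Pi.single j 1 : Fin n → ℝ) k =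
            (if i ∈ s then (1:ℝ) else 0) + (if j ∈ s then (1:ℝ) else 0) := by
          intro s
          simp [Pi.single_apply, Finset.sum_add_distrib, Finset.sum_ite_eq']
        refine ⟨?_, ?_, ?_, ?_⟩
        · intro k
          simp only [Pi.add_apply, Pi.single_apply]
          split <;> split <;> norm_num
        · rw [hsum, if_pos hiL, if_neg (Finset.disjoint_right.1 hdisj hjR)]; norm_num
        · rw [hsum]; simp [hjR, hnotR i hiL]
        · intro i' hi'
          rw [hsum]
          have hiNot : i ∉ R.filter (fun k => ¬ G.Adj i' k) := by
            simp [Finset.mem_filter, hnotR i hiL]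
          rw [if_neg hiNot]
          by_cases h : i' = i
          · subst h
            have : j ∉ R.filter (fun k => ¬ G.Adj i' k) := by
              simp [Finset.mem_filter, hadj]
            rw [if_neg this]
            simp [Pi.single_apply, hij.symm]
          · have hi'j : i' ≠ j := fun e => hnotR i' hi' (e ▸ hjR)
            have hz : (Pi.single i 1 + Pi.single j 1 : Fin n → ℝ) i' = 0 := by
              simp [Pi.single_apply, h, hi'j]
            rw [hz]
            split <;> norm_num
      rcases hbip i j hadj with ⟨hiL, hjR⟩ | ⟨hiR, hjL⟩
      · exact key i j hadj hiL hjR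
      · have := key j i hadj.symm hjL hiR
        have hcomm : (Pi.single i 1 + Pi.single j 1 : Fin n → ℝ)
            = (Pi.single j 1 + Pi.single i 1 : Fin n → ℝ) := by ring
        rw [hcomm]; exact this
    · -- convexity of R'
      intro x hx y hy a b ha hb hab
      obtain ⟨hx0, hxL, hxR, hxC⟩ := hx
      obtain ⟨hy0, hyL, hyR, hyC⟩ := hy
      refine ⟨fun i => add_nonneg (mul_nonneg ha (hx0 i)) (mul_nonneg hb (hy0 i)), ?_, ?_, ?_⟩
      · simp only [Pi.add_apply, Pi.smul_apply, smul_eq_mul, Finset.sum_add_distrib,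
          ← Finset.mul_sum, hxL, hyL]
        linarith
      · simp only [Pi.add_apply, Pi.smul_apply, smul_eq_mul, Finset.sum_add_distrib,
          ← Finset.mul_sum, hxR, hyR]
        linarith
      · intro i hi
        simp only [Pi.add_apply, Pi.smul_apply, smul_eq_mul, Finset.sum_add_distrib,
          ← Finset.mul_sum]
        have h1 := mul_le_mul_of_nonneg_left (hxC i hi) ha
        have h2 := mul_le_mul_of_nonneg_left (hyC i hi) hb
        nlinarith
  · -- R' ⊆ Q
    rw [hR', hQ]
    rintro x ⟨hx0, hxL, hxR, hxC⟩ i j hij hnadj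
    have pair_le : ∀ (s : Finset (Fin n)), i ∈ s → j ∈ s → (∑ k ∈ s, x k = 1) →
        x i + x j ≤ 1 := by
      intro s hi hj hs
      have : ∑ k ∈ ({i, j} : Finset (Fin n)), x k ≤ ∑ k ∈ s, x k :=
        Finset.sum_le_sum_of_subset_of_nonneg
          (by intro k hk; simp at hk; rcases hk with rfl | rfl <;> assumption)
          (fun k _ _ => hx0 k)
      rw [Finset.sum_pair hij] at this
      linarith [this, hs.le]
    by_cases hiL : i ∈ L
    · by_cases hjL : j ∈ L
      · exact pair_le L hiL hjL hxL
      · have hjR := hmem j hjL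
        have hjmem : j ∈ R.filter (fun k => ¬ G.Adj i k) := by
          simp [Finset.mem_filter, hjR, hnadj]
        have hle : x j ≤ ∑ k ∈ R.filter (fun k => ¬ G.Adj i k), x k :=
          Finset.single_le_sum (fun k _ => hx0 k) hjmem
        linarith [hxC i hiL]
    · have hiR := hmem i hiL
      by_cases hjL : j ∈ L
      · have himem : i ∈ R.filter (fun k => ¬ G.Adj j k) := by
          have hna : ¬ G.Adj j i := fun h => hnadj h.symm
          simp [Finset.mem_filter, hiR, hna]
        have hle : x i ≤ ∑ k ∈ R.filter (fun k => ¬ G.Adj j k), x k :=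
          Finset.single_le_sum (fun k _ => hx0 k) himem
        linarith [hxC j hjL]
      · exact pair_le R hiR (hmem j hjL) hxR
end

section
/- Let G be a bipartite graph on n vertices with parts L and R (every edge joins L to R). Let E be the set of edges of G and Ē the set of non-edges (unordered pairs of distinct vertices that are not adjacent). Then the set D = {(e, f) ∈ E × Ē : e and f share no vertex} can be partitioned into at most 2n subsets, each of which is a Cartesian product C × C' with C ⊆ E and C' ⊆ Ē. -/
/-- For a bipartite graph `G` on `n` vertices, the set of disjoint edge/non-edge pairs
can be partitioned into at most `2n` products of a set of edges and a set of non-edges. -/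
theorem bipartite_edge_nonedge_partition (n : ℕ) (G : SimpleGraph (Fin n))
    (L R : Set (Fin n)) (hLR : L ∪ R = Set.univ) (hdisj : Disjoint L R)
    (hbip : ∀ i j, G.Adj i j → (i ∈ L ∧ j ∈ R) ∨ (i ∈ R ∧ j ∈ L))
    (nonEdges : Set (Sym2 (Fin n)))
    (hnonEdges : nonEdges = {s | ¬ s.IsDiag ∧ s ∉ G.edgeSet})
    (D : Set (Sym2 (Fin n) × Sym2 (Fin n)))
    (hD : D = {p | p.1 ∈ G.edgeSet ∧ p.2 ∈ nonEdges ∧ ∀ v, v ∈ p.1 → ¬ v ∈ p.2}) :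
    ∃ (k : ℕ) (C : Fin k → Set (Sym2 (Fin n))) (C' : Fin k → Set (Sym2 (Fin n))),
      k ≤ 2 * n ∧
      (∀ i, C i ⊆ G.edgeSet ∧ C' i ⊆ nonEdges) ∧
      (⋃ i, C i ×ˢ C' i) = D ∧
      Pairwise (fun i j => Disjoint (C i ×ˢ C' i) (C j ×ˢ C' j)) := by
  classical
  have hR' : ∀ v : Fin n, v ∉ L → v ∈ R := by
    intro v hv
    have h : v ∈ L ∪ R := hLR ▸ Set.mem_univ v
    rcases h with h | h
    · exact absurd h hv
    · exact h
  have hL' : ∀ v : Fin n, v ∉ R → v ∈ L := by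
    intro v hv
    have h : v ∈ L ∪ R := hLR ▸ Set.mem_univ v
    rcases h with h | h
    · exact h
    · exact absurd h hv
  have hLnR : ∀ v : Fin n, v ∈ L → v ∉ R := fun v hv => Set.disjoint_left.mp hdisj hv
  have hRnL : ∀ v : Fin n, v ∈ R → v ∉ L := fun v hv => Set.disjoint_right.mp hdisj hv
  -- decomposition of an edge into its L-endpoint and R-endpoint
  have hrep : ∀ e ∈ G.edgeSet, ∃ a b, a ∈ L ∧ b ∈ R ∧ G.Adj a b ∧ e = s(a, b) := by
    intro e he
    induction e using Sym2.ind with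
    | _ a b =>
      rw [SimpleGraph.mem_edgeSet] at he
      rcases hbip a b he with ⟨ha, hb⟩ | ⟨ha, hb⟩
      · exact ⟨a, b, ha, hb, he, rfl⟩
      · exact ⟨b, a, hb, ha, he.symm, Sym2.eq_swap⟩
  -- the rectangles
  set F : Fin n ⊕ Fin n → Set (Sym2 (Fin n)) × Set (Sym2 (Fin n)) := fun i =>
    match i with
    | .inl v =>
      if v ∈ L then
        ({e ∈ G.edgeSet | v ∈ e},
         {f ∈ nonEdges | v ∉ f ∧ (∃ x ∈ f, x ∈ L) ∧ ∀ x ∈ f, x ∈ R → ¬ G.Adj v x})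
      else
        ({e ∈ G.edgeSet | v ∈ e},
         {f ∈ nonEdges | v ∉ f ∧ ∀ x ∈ f, x ∈ R})
    | .inr v =>
      if v ∈ L then (∅, ∅)
      else
        ({e ∈ G.edgeSet | v ∉ e ∧ ∀ x ∈ e, x ∈ L → G.Adj x v},
         {f ∈ nonEdges | v ∈ f ∧ ∃ x ∈ f, x ∈ L})
    with hF
  -- each rectangle consists of edges and non-edges
  have hFsub : ∀ j, (F j).1 ⊆ G.edgeSet ∧ (F j).2 ⊆ nonEdges := by
    rintro (v | v) <;> simp only [hF] <;> split <;>
      constructor <;> intro s hs <;>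
      first
        | exact hs.1
        | exact absurd hs (Set.notMem_empty s)
  -- each rectangle is contained in D
  have hFD : ∀ j, (F j).1 ×ˢ (F j).2 ⊆ D := by
    rintro (v | v) ⟨e, f⟩ hp <;> rw [Set.mem_prod] at hp <;> obtain ⟨hpe, hpf⟩ := hp
    · by_cases hv : v ∈ L
      · simp only [hF, if_pos hv, Set.mem_setOf_eq] at hpe hpf
        obtain ⟨he, hve⟩ := hpe
        obtain ⟨hf, hvf, -, hfadj⟩ := hpf
        obtain ⟨a, b, haL, hbR, hab, rfl⟩ := hrep e he
        have hva : v = a := by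
          rcases Sym2.mem_iff.mp hve with h | h
          · exact h
          · exact absurd (h ▸ hv) (hRnL b hbR)
        subst hva
        rw [hD]
        refine ⟨he, hf, ?_⟩
        intro x hx hxf
        rcases Sym2.mem_iff.mp hx with rfl | rfl
        · exact hvf hxf
        · exact hfadj x hxf hbR hab
      · simp only [hF, if_neg hv, Set.mem_setOf_eq] at hpe hpf
        obtain ⟨he, hve⟩ := hpe
        obtain ⟨hf, hvf, hfR⟩ := hpf
        obtain ⟨a, b, haL, hbR, hab, rfl⟩ := hrep e he
        have hvb : v = b := by
          rcases Sym2.mem_iff.mp hve with h | h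
          · exact absurd (h ▸ haL) hv
          · exact h
        subst hvb
        rw [hD]
        refine ⟨he, hf, ?_⟩
        intro x hx hxf
        rcases Sym2.mem_iff.mp hx with rfl | rfl
        · exact hLnR x haL (hfR x hxf)
        · exact hvf hxf
    · by_cases hv : v ∈ L
      · simp only [hF, if_pos hv] at hpe
        exact absurd hpe (Set.notMem_empty e)
      · simp only [hF, if_neg hv, Set.mem_setOf_eq] at hpe hpf
        obtain ⟨he, hve, headj⟩ := hpe
        obtain ⟨hf, hvf, c, hcf, hcL⟩ := hpf
        obtain ⟨a, b, haL, hbR, hab, rfl⟩ := hrep e he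
        rw [hD]
        refine ⟨he, hf, ?_⟩
        have hcv : c ≠ v := fun h => hv (h ▸ hcL)
        have hfcv : f = s(c, v) := ((Sym2.mem_and_mem_iff hcv).mp ⟨hcf, hvf⟩)
        intro x hx hxf
        rcases Sym2.mem_iff.mp hx with rfl | rfl
        · -- x = a ∈ L; if a ∈ f then f = s(a, v) but Adj a v, contradicting f non-edge
          rcases Sym2.mem_iff.mp (hfcv ▸ hxf) with rfl | rfl
          · have hadjav : G.Adj x v := headj x (Sym2.mem_mk_left x b) haL
            have : f ∈ G.edgeSet := by
              rw [hfcv, SimpleGraph.mem_edgeSet]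
              exact hadjav
            rw [hnonEdges] at hf
            exact hf.2 this
          · exact hve (Sym2.mem_mk_left x b)
        · -- x = b ∈ R; members of f are c ∈ L and v ∉ e
          rcases Sym2.mem_iff.mp (hfcv ▸ hxf) with rfl | rfl
          · exact hRnL x hbR hcL
          · exact hve (Sym2.mem_mk_right a x)
  -- D is covered by the rectangles
  have hcov : ∀ p ∈ D, ∃ j, p ∈ (F j).1 ×ˢ (F j).2 := by
    rintro ⟨e, f⟩ hp
    rw [hD] at hp
    obtain ⟨he, hf, hdis⟩ := hp
    obtain ⟨a, b, haL, hbR, hab, rfl⟩ := hrep e he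
    obtain ⟨c, d, rfl⟩ : ∃ c d, f = s(c, d) := Sym2.ind (fun c d => ⟨c, d, rfl⟩) f
    by_cases hfR : ∀ x ∈ s(c, d), x ∈ R
    · -- f ⊆ R : use the rectangle indexed by the R-endpoint b of e
      refine ⟨.inl b, ?_⟩
      rw [Set.mem_prod]
      simp only [hF, if_neg (hRnL b hbR), Set.mem_setOf_eq]
      exact ⟨⟨he, Sym2.mem_mk_right a b⟩, hf, hdis b (Sym2.mem_mk_right a b), hfR⟩
    · have hfL : ∃ x ∈ s(c, d), x ∈ L := by
        push_neg at hfR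
        obtain ⟨x, hx, hxR⟩ := hfR
        exact ⟨x, hx, hL' x hxR⟩
      by_cases hnadj : ∀ x ∈ s(c, d), x ∈ R → ¬ G.Adj a x
      · -- no R-vertex of f is adjacent to a : use the rectangle indexed by a
        refine ⟨.inl a, ?_⟩
        rw [Set.mem_prod]
        simp only [hF, if_pos haL, Set.mem_setOf_eq]
        exact ⟨⟨he, Sym2.mem_mk_left a b⟩, hf, hdis a (Sym2.mem_mk_left a b), hfL, hnadj⟩
      · -- some R-vertex w of f is adjacent to a : use the rectangle indexed by w
        push_neg at hnadj
        obtain ⟨w, hwf, hwR, hadjaw⟩ := hnadj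
        refine ⟨.inr w, ?_⟩
        rw [Set.mem_prod]
        simp only [hF, if_neg (hRnL w hwR), Set.mem_setOf_eq]
        refine ⟨⟨he, ?_, ?_⟩, hf, hwf, hfL⟩
        · intro hwe
          exact hdis w hwe hwf
        · intro x hx hxL
          rcases Sym2.mem_iff.mp hx with rfl | rfl
          · exact hadjaw
          · exact absurd hxL (hRnL x hbR)
  -- pairwise disjointness of the rectangles
  have hpw : ∀ j j' : Fin n ⊕ Fin n, j ≠ j' →
      ∀ p, p ∈ (F j).1 ×ˢ (F j).2 → p ∈ (F j').1 ×ˢ (F j').2 → False := by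
    have key : ∀ (v w : Fin n), v ∉ L → ∀ p : Sym2 (Fin n) × Sym2 (Fin n),
        p ∈ (F (.inl w)).1 ×ˢ (F (.inl w)).2 → p ∈ (F (.inr v)).1 ×ˢ (F (.inr v)).2 → False := by
      -- interaction between an `inl` and an `inr` rectangle
      intro v w hv ⟨e, f⟩ h1 h2
      rw [Set.mem_prod] at h1 h2
      obtain ⟨h1e, h1f⟩ := h1
      obtain ⟨h2e, h2f⟩ := h2
      simp only [hF, if_neg hv, Set.mem_setOf_eq] at h2e h2f
      obtain ⟨he, hve, headj⟩ := h2e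
      obtain ⟨hf, hvf, c, hcf, hcL⟩ := h2f
      by_cases hw : w ∈ L
      · simp only [hF, if_pos hw, Set.mem_setOf_eq] at h1e h1f
        obtain ⟨-, hwe⟩ := h1e
        obtain ⟨-, hwf, -, hfadj⟩ := h1f
        exact hfadj v hvf (hR' v hv) (headj w hwe hw)
      · simp only [hF, if_neg hw, Set.mem_setOf_eq] at h1f
        obtain ⟨-, -, hfR⟩ := h1f
        exact hRnL c (hfR c hcf) hcL
    rintro (v | v) (v' | v') hne ⟨e, f⟩ h1 h2
    · -- inl / inl
      have hvv' : v ≠ v' := fun h => hne (by rw [h])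
      rw [Set.mem_prod] at h1 h2
      obtain ⟨h1e, h1f⟩ := h1
      obtain ⟨h2e, h2f⟩ := h2
      have hve : v ∈ e := by
        simp only [hF] at h1e; split at h1e <;> exact h1e.2
      have hv'e : v' ∈ e := by
        simp only [hF] at h2e; split at h2e <;> exact h2e.2
      have he : e ∈ G.edgeSet := by
        simp only [hF] at h1e; split at h1e <;> exact h1e.1
      obtain ⟨a, b, haL, hbR, hab, rfl⟩ := hrep e he
      by_cases hv : v ∈ L <;> by_cases hv' : v' ∈ L
      · -- both L-endpoints, hence equal
        have h1 : v = a := by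
          rcases Sym2.mem_iff.mp hve with h | h
          · exact h
          · exact absurd (h ▸ hv) (hRnL b hbR)
        have h2 : v' = a := by
          rcases Sym2.mem_iff.mp hv'e with h | h
          · exact h
          · exact absurd (h ▸ hv') (hRnL b hbR)
        exact hvv' (h1.trans h2.symm)
      · -- f has an L-vertex and f ⊆ R simultaneously
        simp only [hF, if_pos hv, if_neg hv', Set.mem_setOf_eq] at h1f h2f
        obtain ⟨-, -, ⟨x, hxf, hxL⟩, -⟩ := h1f
        obtain ⟨-, -, hfR⟩ := h2f
        exact hRnL x (hfR x hxf) hxL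
      · simp only [hF, if_neg hv, if_pos hv', Set.mem_setOf_eq] at h1f h2f
        obtain ⟨-, -, ⟨x, hxf, hxL⟩, -⟩ := h2f
        obtain ⟨-, -, hfR⟩ := h1f
        exact hRnL x (hfR x hxf) hxL
      · -- both R-endpoints, hence equal
        have h1 : v = b := by
          rcases Sym2.mem_iff.mp hve with h | h
          · exact absurd (h ▸ haL) hv
          · exact h
        have h2 : v' = b := by
          rcases Sym2.mem_iff.mp hv'e with h | h
          · exact absurd (h ▸ haL) hv'
          · exact h
        exact hvv' (h1.trans h2.symm)
    · -- inl / inr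
      by_cases hv' : v' ∈ L
      · rw [Set.mem_prod] at h2
        simp only [hF, if_pos hv'] at h2
        exact absurd h2.1 (Set.notMem_empty _)
      · exact key v' v hv' (e, f) h1 h2
    · -- inr / inl
      by_cases hv : v ∈ L
      · rw [Set.mem_prod] at h1
        simp only [hF, if_pos hv] at h1
        exact absurd h1.1 (Set.notMem_empty _)
      · exact key v v' hv (e, f) h2 h1
    · -- inr / inr
      have hvv' : v ≠ v' := fun h => hne (by rw [h])
      rw [Set.mem_prod] at h1 h2
      obtain ⟨h1e, h1f⟩ := h1
      obtain ⟨h2e, h2f⟩ := h2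
      by_cases hv : v ∈ L
      · simp only [hF, if_pos hv] at h1e
        exact absurd h1e (Set.notMem_empty _)
      by_cases hv' : v' ∈ L
      · simp only [hF, if_pos hv'] at h2e
        exact absurd h2e (Set.notMem_empty _)
      simp only [hF, if_neg hv, if_neg hv', Set.mem_setOf_eq] at h1f h2f
      obtain ⟨-, hvf, c, hcf, hcL⟩ := h1f
      obtain ⟨-, hv'f, -⟩ := h2f
      have hfvv' : f = s(v, v') := (Sym2.mem_and_mem_iff hvv').mp ⟨hvf, hv'f⟩
      rcases Sym2.mem_iff.mp (hfvv' ▸ hcf) with rfl | rfl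
      · exact hv hcL
      · exact hv' hcL
  -- assemble everything, reindexing by `Fin (n + n)`
  refine ⟨n + n, fun i => (F (finSumFinEquiv.symm i)).1, fun i => (F (finSumFinEquiv.symm i)).2,
    by omega, fun i => hFsub _, ?_, ?_⟩
  · have := Function.Surjective.iUnion_comp (f := (finSumFinEquiv (m := n) (n := n)).symm)
      finSumFinEquiv.symm.surjective (g := fun j => (F j).1 ×ˢ (F j).2)
    rw [this]
    apply Set.Subset.antisymm
    · exact Set.iUnion_subset hFD
    · intro p hp
      obtain ⟨j, hj⟩ := hcov p hp
      exact Set.mem_iUnion.mpr ⟨j, hj⟩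
  · intro i j hij
    rw [Set.disjoint_left]
    intro p hp1 hp2
    exact hpw _ _ (fun h => hij (finSumFinEquiv.symm.injective h)) p hp1 hp2
end

section
/- There is a constant C such that for every n ≥ 2 and every simple graph G on n vertices, the set D = {(e, f) : e an edge of G, f a non-edge of G, e and f share no vertex} can be partitioned into at most C · n · log₂ n subsets, each of which is a Cartesian product C' × C'' with C' a set of edges and C'' a set of non-edges. -/
namespace EdgeNonedgePartition

variable {n : ℕ}

/-- block index of a vertex value at dyadic level `ℓ`. -/
def q (ℓ : ℕ) (x : Fin n) : ℕ := (x : ℕ) / 2 ^ ℓ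
/-- `x` lies in the left half of the level-`(ℓ+1)` dyadic block of `v`. -/
def loL (ℓ : ℕ) (v x : Fin n) : Prop := q ℓ x = 2 * q (ℓ+1) v
/-- `x` lies in the right half of the level-`(ℓ+1)` dyadic block of `v`. -/
def loR (ℓ : ℕ) (v x : Fin n) : Prop := q ℓ x = 2 * q (ℓ+1) v + 1

/-- the set of non-edges of `G`. -/
def F (G : SimpleGraph (Fin n)) : Set (Sym2 (Fin n)) :=
  {s | ¬ s.IsDiag ∧ s ∉ G.edgeSet}

inductive Tag | t0 | t1 | t2 | t3 | t4 | t5 | t6 | t7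
  deriving DecidableEq

instance : Fintype Tag :=
  ⟨⟨↑[Tag.t0, .t1, .t2, .t3, .t4, .t5, .t6, .t7], by decide⟩, fun x => by cases x <;> decide⟩

/-- first components (sets of edges) of the rectangles. -/
def A (G : SimpleGraph (Fin n)) (ℓ : ℕ) (v : Fin n) : Tag → Set (Sym2 (Fin n))
  | .t0 => {e | e ∈ G.edgeSet ∧ (∀ x ∈ e, loL ℓ v x)}
  | .t1 => {e | e ∈ G.edgeSet ∧ (∀ x ∈ e, loR ℓ v x)}
  | .t2 => {e | e ∈ G.edgeSet ∧ (∀ x ∈ e, loL ℓ v x) ∧ v ∉ e}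
  | .t3 => {e | e ∈ G.edgeSet ∧ (∀ x ∈ e, loR ℓ v x) ∧ v ∉ e}
  | .t4 => {e | e ∈ G.edgeSet ∧ v ∈ e ∧ (∀ x ∈ e, x ≠ v → loR ℓ v x) ∧
      (∃ x ∈ e, loR ℓ v x) ∧ loL ℓ v v}
  | .t5 => {e | e ∈ G.edgeSet ∧ v ∈ e ∧ (∀ x ∈ e, x ≠ v → loL ℓ v x) ∧
      (∃ x ∈ e, loL ℓ v x) ∧ loR ℓ v v}
  | .t6 => {e | e ∈ G.edgeSet ∧ (∀ x ∈ e, loL ℓ v x ∨ loR ℓ v x) ∧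
      (∃ x ∈ e, loL ℓ v x) ∧ (∃ x ∈ e, loR ℓ v x) ∧
      (∀ x ∈ e, loL ℓ v x → G.Adj v x) ∧ v ∉ e}
  | .t7 => {e | e ∈ G.edgeSet ∧ v ∈ e ∧ (∀ x ∈ e, x ≠ v → loR ℓ v x) ∧
      (∃ x ∈ e, loR ℓ v x) ∧ loL ℓ v v ∧ True}

/-- second components (sets of non-edges) of the rectangles. -/
def B (G : SimpleGraph (Fin n)) (ℓ : ℕ) (v : Fin n) : Tag → Set (Sym2 (Fin n))
  | .t0 => {f | f ∈ F G ∧ (∀ x ∈ f, loR ℓ v x) ∧ (v : ℕ) % 2 ^ (ℓ+1) = 0}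
  | .t1 => {f | f ∈ F G ∧ (∀ x ∈ f, loL ℓ v x) ∧ (v : ℕ) % 2 ^ (ℓ+1) = 0}
  | .t2 => {f | f ∈ F G ∧ v ∈ f ∧ (∀ x ∈ f, x ≠ v → loR ℓ v x) ∧
      (∃ x ∈ f, loR ℓ v x) ∧ loL ℓ v v}
  | .t3 => {f | f ∈ F G ∧ v ∈ f ∧ (∀ x ∈ f, x ≠ v → loL ℓ v x) ∧
      (∃ x ∈ f, loL ℓ v x) ∧ loR ℓ v v}
  | .t4 => {f | f ∈ F G ∧ (∀ x ∈ f, loL ℓ v x) ∧ v ∉ f}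
  | .t5 => {f | f ∈ F G ∧ (∀ x ∈ f, loR ℓ v x) ∧ v ∉ f}
  | .t6 => {f | f ∈ F G ∧ v ∈ f ∧ (∀ x ∈ f, x ≠ v → loL ℓ v x) ∧
      (∃ x ∈ f, loL ℓ v x) ∧ loR ℓ v v}
  | .t7 => {f | f ∈ F G ∧ (∀ x ∈ f, loL ℓ v x ∨ loR ℓ v x) ∧
      (∃ x ∈ f, loL ℓ v x) ∧ (∃ x ∈ f, loR ℓ v x) ∧
      (∀ x ∈ f, loR ℓ v x → ¬ G.Adj v x) ∧ v ∉ f}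

variable {G : SimpleGraph (Fin n)}

lemma notLR {ℓ : ℕ} {v x : Fin n} (h1 : loL ℓ v x) (h2 : loR ℓ v x) : False := by
  unfold loL loR at *; omega

lemma sym2_exists_mem (s : Sym2 (Fin n)) : ∃ x, x ∈ s :=
  s.inductionOn (fun x y => ⟨x, Sym2.mem_mk_left x y⟩)

lemma nonedge_not_adj {f : Sym2 (Fin n)} (hf : f ∈ F G) {x y : Fin n}
    (hx : x ∈ f) (hy : y ∈ f) (hxy : x ≠ y) : ¬ G.Adj x y := by
  have : f = s(x,y) := ((Sym2.mem_and_mem_iff hxy).mp ⟨hx, hy⟩)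
  intro hadj
  exact hf.2 (by rw [this]; exact G.mem_edgeSet.mpr hadj)

lemma edge_adj {e : Sym2 (Fin n)} (he : e ∈ G.edgeSet) {x y : Fin n}
    (hx : x ∈ e) (hy : y ∈ e) (hxy : x ≠ y) : G.Adj x y := by
  have : e = s(x,y) := ((Sym2.mem_and_mem_iff hxy).mp ⟨hx, hy⟩)
  rw [this] at he; exact G.mem_edgeSet.mp he

/-- validity : rectangles consist of disjoint (edge, non-edge) pairs. -/
lemma valid {ℓ : ℕ} {v : Fin n} {t : Tag} {e f : Sym2 (Fin n)}
    (he : e ∈ A G ℓ v t) (hf : f ∈ B G ℓ v t) :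
    ∀ x ∈ e, x ∉ f := by
  intro x hxe hxf
  cases t with
  | t0 => exact notLR (he.2 x hxe) (hf.2.1 x hxf)
  | t1 => exact notLR (hf.2.1 x hxf) (he.2 x hxe)
  | t2 =>
      have hxv : x ≠ v := fun h => he.2.2 (h ▸ hxe)
      exact notLR (he.2.1 x hxe) (hf.2.2.1 x hxf hxv)
  | t3 =>
      have hxv : x ≠ v := fun h => he.2.2 (h ▸ hxe)
      exact notLR (hf.2.2.1 x hxf hxv) (he.2.1 x hxe)
  | t4 =>
      by_cases hxv : x = v
      · exact hf.2.2 (hxv ▸ hxf)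
      · exact notLR (hf.2.1 x hxf) (he.2.2.1 x hxe hxv)
  | t5 =>
      by_cases hxv : x = v
      · exact hf.2.2 (hxv ▸ hxf)
      · exact notLR (he.2.2.1 x hxe hxv) (hf.2.1 x hxf)
  | t6 =>
      have hxv : x ≠ v := fun h => he.2.2.2.2.2 (h ▸ hxe)
      have hxL : loL ℓ v x := hf.2.2.1 x hxf hxv
      have hadj : G.Adj v x := he.2.2.2.2.1 x hxe hxL
      exact nonedge_not_adj hf.1 hf.2.1 hxf hxv.symm (by exact hadj)
  | t7 =>
      have hxv : x ≠ v := fun h => hf.2.2.2.2.2 (h ▸ hxf)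
      have hxR : loR ℓ v x := he.2.2.1 x hxe hxv
      have hnadj : ¬ G.Adj v x := hf.2.2.2.2.1 x hxf hxR
      exact hnadj (edge_adj he.1 he.2.1 hxe hxv.symm)

lemma qsucc (ℓ : ℕ) (x : Fin n) : q (ℓ+1) x = q ℓ x / 2 := by
  unfold q; rw [pow_succ, ← Nat.div_div_eq_div_mul]

lemma upL {ℓ : ℕ} {v x : Fin n} (h : loL ℓ v x) : q (ℓ+1) x = q (ℓ+1) v := by
  unfold loL at h; rw [qsucc, h]; omega

lemma upR {ℓ : ℕ} {v x : Fin n} (h : loR ℓ v x) : q (ℓ+1) x = q (ℓ+1) v := by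
  unfold loR at h; rw [qsucc, h]; omega

lemma stepUp {a b : ℕ} (hab : a ≤ b) {x y : Fin n} (h : q a x = q a y) :
    q b x = q b y := by
  have hx : q b x = q a x / 2 ^ (b - a) := by
    unfold q; rw [Nat.div_div_eq_div_mul, ← pow_add]; congr 2; omega
  have hy : q b y = q a y / 2 ^ (b - a) := by
    unfold q; rw [Nat.div_div_eq_div_mul, ← pow_add]; congr 2; omega
  rw [hx, hy, h]

lemma node_unique {W : Fin n → Prop} {ℓ ℓ' : ℕ} {v v' : Fin n}
    (h1 : ∀ x, W x → q (ℓ+1) x = q (ℓ+1) v)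
    (h2 : ∃ x, W x ∧ loL ℓ v x) (h3 : ∃ x, W x ∧ loR ℓ v x)
    (h1' : ∀ x, W x → q (ℓ'+1) x = q (ℓ'+1) v')
    (h2' : ∃ x, W x ∧ loL ℓ' v' x) (h3' : ∃ x, W x ∧ loR ℓ' v' x) :
    ℓ = ℓ' ∧ q (ℓ+1) v = q (ℓ'+1) v' := by
  have key : ∀ (m m' : ℕ) (w w' : Fin n),
      (∀ x, W x → q (m+1) x = q (m+1) w) →
      (∃ x, W x ∧ loL m' w' x) → (∃ x, W x ∧ loR m' w' x) → ¬ (m < m') := by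
    intro m m' w w' ha hL hR hlt
    obtain ⟨x, hxW, hxL⟩ := hL
    obtain ⟨y, hyW, hyR⟩ := hR
    have hx : q m' x = q m' w := stepUp (by omega) (ha x hxW)
    have hy : q m' y = q m' w := stepUp (by omega) (ha y hyW)
    unfold loL at hxL; unfold loR at hyR
    omega
  have hll : ℓ = ℓ' := by
    have h₁ := key ℓ ℓ' v v' h1 h2' h3'
    have h₂ := key ℓ' ℓ v' v h1' h2 h3
    omega
  subst hll
  obtain ⟨x, hxW, _⟩ := h2
  exact ⟨rfl, (h1 x hxW).symm.trans (h1' x hxW)⟩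

lemma loL_congr {ℓ : ℕ} {v v' x : Fin n} (h : q (ℓ+1) v = q (ℓ+1) v') :
    loL ℓ v x ↔ loL ℓ v' x := by unfold loL; omega

lemma loR_congr {ℓ : ℕ} {v v' x : Fin n} (h : q (ℓ+1) v = q (ℓ+1) v') :
    loR ℓ v x ↔ loR ℓ v' x := by unfold loR; omega

/-- from membership in a rectangle, extract the node data of the four vertices. -/
lemma node_of_mem {ℓ : ℕ} {v : Fin n} {t : Tag} {e f : Sym2 (Fin n)}
    (he : e ∈ A G ℓ v t) (hf : f ∈ B G ℓ v t) :
    (∀ x, (x ∈ e ∨ x ∈ f) → q (ℓ+1) x = q (ℓ+1) v) ∧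
    (∃ x, (x ∈ e ∨ x ∈ f) ∧ loL ℓ v x) ∧
    (∃ x, (x ∈ e ∨ x ∈ f) ∧ loR ℓ v x) := by
  obtain ⟨xe, hxe⟩ := sym2_exists_mem e
  obtain ⟨xf, hxf⟩ := sym2_exists_mem f
  cases t with
  | t0 =>
      refine ⟨?_, ⟨xe, Or.inl hxe, he.2 xe hxe⟩, ⟨xf, Or.inr hxf, hf.2.1 xf hxf⟩⟩
      rintro x (hx | hx)
      · exact upL (he.2 x hx)
      · exact upR (hf.2.1 x hx)
  | t1 =>
      refine ⟨?_, ⟨xf, Or.inr hxf, hf.2.1 xf hxf⟩, ⟨xe, Or.inl hxe, he.2 xe hxe⟩⟩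
      rintro x (hx | hx)
      · exact upR (he.2 x hx)
      · exact upL (hf.2.1 x hx)
  | t2 =>
      obtain ⟨y, hyf, hyR⟩ := hf.2.2.2.1
      refine ⟨?_, ⟨xe, Or.inl hxe, he.2.1 xe hxe⟩, ⟨y, Or.inr hyf, hyR⟩⟩
      rintro x (hx | hx)
      · exact upL (he.2.1 x hx)
      · by_cases hxv : x = v
        · subst hxv; rfl
        · exact upR (hf.2.2.1 x hx hxv)
  | t3 =>
      obtain ⟨y, hyf, hyL⟩ := hf.2.2.2.1
      refine ⟨?_, ⟨y, Or.inr hyf, hyL⟩, ⟨xe, Or.inl hxe, he.2.1 xe hxe⟩⟩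
      rintro x (hx | hx)
      · exact upR (he.2.1 x hx)
      · by_cases hxv : x = v
        · subst hxv; rfl
        · exact upL (hf.2.2.1 x hx hxv)
  | t4 =>
      obtain ⟨y, hye, hyR⟩ := he.2.2.2.1
      refine ⟨?_, ⟨v, Or.inl he.2.1, he.2.2.2.2⟩, ⟨y, Or.inl hye, hyR⟩⟩
      rintro x (hx | hx)
      · by_cases hxv : x = v
        · subst hxv; rfl
        · exact upR (he.2.2.1 x hx hxv)
      · exact upL (hf.2.1 x hx)
  | t5 =>
      obtain ⟨y, hye, hyL⟩ := he.2.2.2.1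
      refine ⟨?_, ⟨y, Or.inl hye, hyL⟩, ⟨v, Or.inl he.2.1, he.2.2.2.2⟩⟩
      rintro x (hx | hx)
      · by_cases hxv : x = v
        · subst hxv; rfl
        · exact upL (he.2.2.1 x hx hxv)
      · exact upR (hf.2.1 x hx)
  | t6 =>
      obtain ⟨y, hye, hyL⟩ := he.2.2.1
      obtain ⟨z, hze, hzR⟩ := he.2.2.2.1
      refine ⟨?_, ⟨y, Or.inl hye, hyL⟩, ⟨z, Or.inl hze, hzR⟩⟩
      rintro x (hx | hx)
      · rcases he.2.1 x hx with h | h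
        · exact upL h
        · exact upR h
      · by_cases hxv : x = v
        · subst hxv; rfl
        · exact upL (hf.2.2.1 x hx hxv)
  | t7 =>
      obtain ⟨y, hye, hyR⟩ := he.2.2.2.1
      refine ⟨?_, ⟨v, Or.inl he.2.1, he.2.2.2.2.1⟩, ⟨y, Or.inl hye, hyR⟩⟩
      rintro x (hx | hx)
      · by_cases hxv : x = v
        · subst hxv; rfl
        · exact upR (he.2.2.1 x hx hxv)
      · rcases hf.2.1 x hx with h | h
        · exact upL h
        · exact upR h

end EdgeNonedgePartition

namespace EdgeNonedgePartition
variable {n : ℕ} {G : SimpleGraph (Fin n)}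

def eCls : Tag → ℕ
  | .t0 => 0 | .t1 => 1 | .t2 => 0 | .t3 => 1 | .t4 => 2 | .t5 => 2 | .t6 => 2 | .t7 => 2

def fCls : Tag → ℕ
  | .t0 => 1 | .t1 => 0 | .t2 => 2 | .t3 => 2 | .t4 => 0 | .t5 => 1 | .t6 => 2 | .t7 => 2

def clsP (c ℓ : ℕ) (v : Fin n) (s : Sym2 (Fin n)) : Prop :=
  match c with
  | 0 => ∀ x ∈ s, loL ℓ v x
  | 1 => ∀ x ∈ s, loR ℓ v x
  | _ => (∃ x ∈ s, loL ℓ v x) ∧ (∃ x ∈ s, loR ℓ v x)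

lemma memA_cls {ℓ : ℕ} {v : Fin n} {t : Tag} {e : Sym2 (Fin n)}
    (he : e ∈ A G ℓ v t) : clsP (eCls t) ℓ v e := by
  cases t with
  | t0 => exact he.2
  | t1 => exact he.2
  | t2 => exact he.2.1
  | t3 => exact he.2.1
  | t4 => exact ⟨⟨v, he.2.1, he.2.2.2.2⟩, he.2.2.2.1⟩
  | t5 => exact ⟨he.2.2.2.1, ⟨v, he.2.1, he.2.2.2.2⟩⟩
  | t6 => exact ⟨he.2.2.1, he.2.2.2.1⟩
  | t7 => exact ⟨⟨v, he.2.1, he.2.2.2.2.1⟩, he.2.2.2.1⟩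

lemma memB_cls {ℓ : ℕ} {v : Fin n} {t : Tag} {f : Sym2 (Fin n)}
    (hf : f ∈ B G ℓ v t) : clsP (fCls t) ℓ v f := by
  cases t with
  | t0 => exact hf.2.1
  | t1 => exact hf.2.1
  | t2 => exact ⟨⟨v, hf.2.1, hf.2.2.2.2⟩, hf.2.2.2.1⟩
  | t3 => exact ⟨hf.2.2.2.1, ⟨v, hf.2.1, hf.2.2.2.2⟩⟩
  | t4 => exact hf.2.1
  | t5 => exact hf.2.1
  | t6 => exact ⟨hf.2.2.2.1, ⟨v, hf.2.1, hf.2.2.2.2⟩⟩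
  | t7 => exact ⟨hf.2.2.1, hf.2.2.2.1⟩

lemma cls_unique {c c' ℓ : ℕ} {v v' : Fin n} {s : Sym2 (Fin n)}
    (h : clsP c ℓ v s) (h' : clsP c' ℓ v' s)
    (hq : q (ℓ+1) v = q (ℓ+1) v') (hc : c ≤ 2) (hc' : c' ≤ 2) : c = c' := by
  obtain ⟨z, hz⟩ := sym2_exists_mem s
  interval_cases c <;> interval_cases c' <;> try rfl
  · exact absurd ((loR_congr hq).mpr (h' z hz)) (fun hh => notLR (h z hz) hh)
  · obtain ⟨x, hx, hxR⟩ := h'.2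
    exact absurd ((loR_congr hq).mpr hxR) (fun hh => notLR (h x hx) hh)
  · exact absurd ((loL_congr hq).mpr (h' z hz)) (fun hh => notLR hh (h z hz))
  · obtain ⟨x, hx, hxL⟩ := h'.1
    exact absurd ((loL_congr hq).mpr hxL) (fun hh => notLR hh (h x hx))
  · obtain ⟨x, hx, hxR⟩ := h.2
    exact absurd ((loL_congr hq).mpr (h' x hx)) (fun hh => notLR hh hxR)
  · obtain ⟨x, hx, hxL⟩ := h.1
    exact absurd ((loR_congr hq).mpr (h' x hx)) (fun hh => notLR hxL hh)

lemma eCls_le (t : Tag) : eCls t ≤ 2 := by cases t <;> decide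
lemma fCls_le (t : Tag) : fCls t ≤ 2 := by cases t <;> decide

lemma tag_cls_det : ∀ t t' : Tag, eCls t = eCls t' → fCls t = fCls t' →
    t = t' ∨ (t = .t6 ∧ t' = .t7) ∨ (t = .t7 ∧ t' = .t6) := by decide

lemma no67 {ℓ : ℕ} {v v' : Fin n} {e f : Sym2 (Fin n)}
    (he : e ∈ A G ℓ v .t6) (hf : f ∈ B G ℓ v .t6)
    (he' : e ∈ A G ℓ v' .t7) (hf' : f ∈ B G ℓ v' .t7)
    (hq : q (ℓ+1) v = q (ℓ+1) v') : False := by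
  have hv'e : v' ∈ e := he'.2.1
  have hLvv' : loL ℓ v v' := (loL_congr hq).mpr he'.2.2.2.2.1
  have hadj : G.Adj v v' := he.2.2.2.2.1 v' hv'e hLvv'
  have hvf : v ∈ f := hf.2.1
  have hRv'v : loR ℓ v' v := (loR_congr hq).mp hf.2.2.2.2
  exact hf'.2.2.2.2.1 v hvf hRv'v hadj.symm

lemma v_unique {ℓ : ℕ} {v v' : Fin n} {t : Tag} {e f : Sym2 (Fin n)}
    (he : e ∈ A G ℓ v t) (hf : f ∈ B G ℓ v t)
    (he' : e ∈ A G ℓ v' t) (hf' : f ∈ B G ℓ v' t)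
    (hq : q (ℓ+1) v = q (ℓ+1) v') : v = v' := by
  have hdm := Nat.div_add_mod (v : ℕ) (2 ^ (ℓ+1))
  have hdm' := Nat.div_add_mod (v' : ℕ) (2 ^ (ℓ+1))
  have hqq : (v : ℕ) / 2 ^ (ℓ+1) = (v' : ℕ) / 2 ^ (ℓ+1) := hq
  cases t with
  | t0 =>
      have h1 : (v : ℕ) % 2^(ℓ+1) = 0 := hf.2.2
      have h2 : (v' : ℕ) % 2^(ℓ+1) = 0 := hf'.2.2
      have hv : (v : ℕ) = 2^(ℓ+1) * ((v' : ℕ)/2^(ℓ+1)) := by rw [← hqq]; omega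
      have hv' : (v' : ℕ) = 2^(ℓ+1) * ((v' : ℕ)/2^(ℓ+1)) := by omega
      exact Fin.ext (by rw [hv, ← hv'])
  | t1 =>
      have h1 : (v : ℕ) % 2^(ℓ+1) = 0 := hf.2.2
      have h2 : (v' : ℕ) % 2^(ℓ+1) = 0 := hf'.2.2
      have hv : (v : ℕ) = 2^(ℓ+1) * ((v' : ℕ)/2^(ℓ+1)) := by rw [← hqq]; omega
      have hv' : (v' : ℕ) = 2^(ℓ+1) * ((v' : ℕ)/2^(ℓ+1)) := by omega
      exact Fin.ext (by rw [hv, ← hv'])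
  | t2 =>
      by_contra hne
      have h1 : loL ℓ v v' := (loL_congr hq).mpr hf'.2.2.2.2
      exact notLR h1 (hf.2.2.1 v' hf'.2.1 (fun hh => hne hh.symm))
  | t3 =>
      by_contra hne
      have h1 : loR ℓ v v' := (loR_congr hq).mpr hf'.2.2.2.2
      exact notLR (hf.2.2.1 v' hf'.2.1 (fun hh => hne hh.symm)) h1
  | t4 =>
      by_contra hne
      have h1 : loL ℓ v v' := (loL_congr hq).mpr he'.2.2.2.2
      exact notLR h1 (he.2.2.1 v' he'.2.1 (fun hh => hne hh.symm))
  | t5 =>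
      by_contra hne
      have h1 : loR ℓ v v' := (loR_congr hq).mpr he'.2.2.2.2
      exact notLR (he.2.2.1 v' he'.2.1 (fun hh => hne hh.symm)) h1
  | t6 =>
      by_contra hne
      have h1 : loR ℓ v v' := (loR_congr hq).mpr hf'.2.2.2.2
      exact notLR (hf.2.2.1 v' hf'.2.1 (fun hh => hne hh.symm)) h1
  | t7 =>
      by_contra hne
      have h1 : loL ℓ v v' := (loL_congr hq).mpr he'.2.2.2.2.1
      exact notLR h1 (he.2.2.1 v' he'.2.1 (fun hh => hne hh.symm))

/-- full uniqueness of the rectangle index. -/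
lemma rect_unique {ℓ ℓ' : ℕ} {v v' : Fin n} {t t' : Tag} {e f : Sym2 (Fin n)}
    (he : e ∈ A G ℓ v t) (hf : f ∈ B G ℓ v t)
    (he' : e ∈ A G ℓ' v' t') (hf' : f ∈ B G ℓ' v' t') :
    ℓ = ℓ' ∧ v = v' ∧ t = t' := by
  obtain ⟨h1, h2, h3⟩ := node_of_mem he hf
  obtain ⟨h1', h2', h3'⟩ := node_of_mem he' hf'
  obtain ⟨hll, hqq⟩ := node_unique h1 h2 h3 h1' h2' h3'
  subst hll
  have hce : eCls t = eCls t' :=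
    cls_unique (memA_cls he) (memA_cls he') hqq (eCls_le t) (eCls_le t')
  have hcf : fCls t = fCls t' :=
    cls_unique (memB_cls hf) (memB_cls hf') hqq (fCls_le t) (fCls_le t')
  rcases tag_cls_det t t' hce hcf with htt | ⟨h6, h7⟩ | ⟨h7, h6⟩
  · subst htt
    exact ⟨rfl, v_unique he hf he' hf' hqq, rfl⟩
  · subst h6; subst h7; exact absurd (no67 he hf he' hf' hqq) id
  · subst h6; subst h7; exact absurd (no67 he' hf' he hf hqq.symm) id

end EdgeNonedgePartition

namespace EdgeNonedgePartition
variable {n : ℕ} {G : SimpleGraph (Fin n)}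

lemma edge_rep (e : Sym2 (Fin n)) (he : e ∈ G.edgeSet) :
    ∃ a b : Fin n, e = s(a,b) ∧ G.Adj a b := by
  obtain ⟨a, b, rfl⟩ : ∃ a b : Fin n, e = s(a,b) :=
    e.inductionOn (fun x y => ⟨x, y, rfl⟩)
  exact ⟨a, b, rfl, G.mem_edgeSet.mp he⟩

lemma nonedge_rep (f : Sym2 (Fin n)) (hf : f ∈ F G) :
    ∃ c d : Fin n, f = s(c,d) ∧ c ≠ d ∧ ¬ G.Adj c d := by
  obtain ⟨c, d, rfl⟩ : ∃ c d : Fin n, f = s(c,d) :=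
    f.inductionOn (fun x y => ⟨x, y, rfl⟩)
  refine ⟨c, d, rfl, ?_, ?_⟩
  · intro h; exact hf.1 (by rw [Sym2.mk_isDiag_iff]; exact h)
  · intro h; exact hf.2 (G.mem_edgeSet.mpr h)

/-- classification of a 2-set w.r.t. the two halves. -/
lemma classify {ℓ p : ℕ} {s : Sym2 (Fin n)} {x y : Fin n} (hrep : s = s(x,y))
    (hxy : x ≠ y)
    (hs : ∀ z ∈ s, q ℓ z = 2*p ∨ q ℓ z = 2*p+1) :
    (∀ z ∈ s, q ℓ z = 2*p) ∨ (∀ z ∈ s, q ℓ z = 2*p+1) ∨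
    (∃ u w : Fin n, s = s(u,w) ∧ u ≠ w ∧ q ℓ u = 2*p ∧ q ℓ w = 2*p+1) := by
  subst hrep
  have hx := hs x (Sym2.mem_mk_left x y)
  have hy := hs y (Sym2.mem_mk_right x y)
  rcases hx with hx | hx <;> rcases hy with hy | hy
  · left; intro z hz; rcases Sym2.mem_iff.mp hz with rfl | rfl <;> assumption
  · exact Or.inr (Or.inr ⟨x, y, rfl, hxy, hx, hy⟩)
  · exact Or.inr (Or.inr ⟨y, x, Sym2.eq_swap, hxy.symm, hy, hx⟩)
  · right; left; intro z hz; rcases Sym2.mem_iff.mp hz with rfl | rfl <;> assumption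

/-- coverage : every disjoint (edge, non-edge) pair lies in some rectangle with `ℓ < L`. -/
lemma cover {L : ℕ} (hLn : ∀ x : Fin n, (x:ℕ) < 2^L) {e f : Sym2 (Fin n)}
    (he : e ∈ G.edgeSet) (hf : f ∈ F G) (hdisj : ∀ x ∈ e, x ∉ f) :
    ∃ ℓ : ℕ, ℓ < L ∧ ∃ (v : Fin n) (t : Tag), e ∈ A G ℓ v t ∧ f ∈ B G ℓ v t := by
  classical
  obtain ⟨a, b, hab_eq, hab⟩ := edge_rep e he
  obtain ⟨c, d, hcd_eq, hcd, hncd⟩ := nonedge_rep f hf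
  have hae : a ∈ e := by rw [hab_eq]; exact Sym2.mem_mk_left a b
  have hbe : b ∈ e := by rw [hab_eq]; exact Sym2.mem_mk_right a b
  have hcf : c ∈ f := by rw [hcd_eq]; exact Sym2.mem_mk_left c d
  have hdf : d ∈ f := by rw [hcd_eq]; exact Sym2.mem_mk_right c d
  -- the least level at which all four vertices agree
  have hAL : q L a = q L b ∧ q L a = q L c ∧ q L a = q L d := by
    refine ⟨?_, ?_, ?_⟩ <;>
      simp only [q, Nat.div_eq_of_lt (hLn _), Nat.div_eq_of_lt (hLn _)]
  have hex : ∃ m : ℕ, q m a = q m b ∧ q m a = q m c ∧ q m a = q m d := ⟨L, hAL⟩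
  have hagree0 := Nat.find_spec hex
  have hm0le : Nat.find hex ≤ L := Nat.find_le hAL
  have hm0ne : Nat.find hex ≠ 0 := by
    intro h
    rw [h] at hagree0
    have hab' : (a:ℕ) = (b:ℕ) := by simpa [q] using hagree0.1
    exact hab.ne (Fin.ext hab')
  obtain ⟨ℓ, hℓ⟩ : ∃ ℓ, Nat.find hex = ℓ + 1 := ⟨Nat.find hex - 1, by omega⟩
  have hℓL : ℓ < L := by omega
  have hnag : ¬ (q ℓ a = q ℓ b ∧ q ℓ a = q ℓ c ∧ q ℓ a = q ℓ d) :=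
    Nat.find_min hex (by omega)
  rw [hℓ] at hagree0
  set p := q (ℓ+1) a with hp
  have hall : ∀ x : Fin n, (x ∈ e ∨ x ∈ f) → q (ℓ+1) x = p := by
    rintro x (hx | hx)
    · rw [hab_eq] at hx
      rcases Sym2.mem_iff.mp hx with rfl | rfl
      · rfl
      · exact hagree0.1.symm
    · rw [hcd_eq] at hx
      rcases Sym2.mem_iff.mp hx with rfl | rfl
      · exact hagree0.2.1.symm
      · exact hagree0.2.2.symm
  have hsplitAll : ∀ x : Fin n, (x ∈ e ∨ x ∈ f) →
      q ℓ x = 2*p ∨ q ℓ x = 2*p+1 := by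
    intro x hx
    have h1 := hall x hx
    rw [qsucc] at h1
    omega
  have mkL : ∀ {v x : Fin n}, (v ∈ e ∨ v ∈ f) → q ℓ x = 2*p → loL ℓ v x := by
    intro v x hv hx; unfold loL; rw [hall v hv]; exact hx
  have mkR : ∀ {v x : Fin n}, (v ∈ e ∨ v ∈ f) → q ℓ x = 2*p+1 → loR ℓ v x := by
    intro v x hv hx; unfold loR; rw [hall v hv]; exact hx
  have hce : ∀ z ∈ e, q ℓ z = 2*p ∨ q ℓ z = 2*p+1 := fun z hz => hsplitAll z (Or.inl hz)
  have hcf' : ∀ z ∈ f, q ℓ z = 2*p ∨ q ℓ z = 2*p+1 := fun z hz => hsplitAll z (Or.inr hz)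
  rcases classify hab_eq hab.ne hce with heL | heR | ⟨u, w, heq, huw, huL, hwR⟩ <;>
    rcases classify hcd_eq hcd hcf' with hfL | hfR | ⟨u', w', hfeq, hu'w', hu'L, hw'R⟩
  -- e ⊆ L, f ⊆ L : impossible
  · exact absurd ⟨by rw [heL a hae, heL b hbe], by rw [heL a hae, hfL c hcf],
      by rw [heL a hae, hfL d hdf]⟩ hnag
  -- e ⊆ L, f ⊆ R : t0
  · have hble : p * 2^(ℓ+1) ≤ (a:ℕ) := Nat.div_mul_le_self _ _
    refine ⟨ℓ, hℓL, ⟨p * 2^(ℓ+1), lt_of_le_of_lt hble a.isLt⟩, .t0, ?_, ?_⟩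
    · refine ⟨he, fun x hx => ?_⟩
      show q ℓ x = 2 * q (ℓ+1) (⟨p * 2^(ℓ+1), lt_of_le_of_lt hble a.isLt⟩ : Fin n)
      have hqv : q (ℓ+1) (⟨p * 2^(ℓ+1), lt_of_le_of_lt hble a.isLt⟩ : Fin n) = p :=
        Nat.mul_div_cancel p (Nat.two_pow_pos _)
      rw [hqv]; exact heL x hx
    · refine ⟨hf, fun x hx => ?_, ?_⟩
      · unfold loR q
        simp only [Nat.mul_div_cancel _ (Nat.two_pow_pos _)]
        exact hfR x hx
      · exact Nat.mul_mod_left _ _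
  -- e ⊆ L, f crossing : t2 with v = left elt of f
  · have hu'f : u' ∈ f := by rw [hfeq]; exact Sym2.mem_mk_left u' w'
    have hw'f : w' ∈ f := by rw [hfeq]; exact Sym2.mem_mk_right u' w'
    refine ⟨ℓ, hℓL, u', .t2, ⟨he, fun x hx => mkL (Or.inr hu'f) (heL x hx), ?_⟩,
      ⟨hf, hu'f, ?_, ⟨w', hw'f, mkR (Or.inr hu'f) hw'R⟩, mkL (Or.inr hu'f) hu'L⟩⟩
    · intro h; exact hdisj u' h hu'f
    · intro x hx hxu'
      rw [hfeq] at hx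
      rcases Sym2.mem_iff.mp hx with rfl | rfl
      · exact absurd rfl hxu'
      · exact mkR (Or.inr hu'f) hw'R
  -- e ⊆ R, f ⊆ L : t1
  · have hble : p * 2^(ℓ+1) ≤ (a:ℕ) := Nat.div_mul_le_self _ _
    refine ⟨ℓ, hℓL, ⟨p * 2^(ℓ+1), lt_of_le_of_lt hble a.isLt⟩, .t1, ?_, ?_⟩
    · refine ⟨he, fun x hx => ?_⟩
      show q ℓ x = 2 * q (ℓ+1) (⟨p * 2^(ℓ+1), lt_of_le_of_lt hble a.isLt⟩ : Fin n) + 1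
      have hqv : q (ℓ+1) (⟨p * 2^(ℓ+1), lt_of_le_of_lt hble a.isLt⟩ : Fin n) = p :=
        Nat.mul_div_cancel p (Nat.two_pow_pos _)
      rw [hqv]; exact heR x hx
    · refine ⟨hf, fun x hx => ?_, ?_⟩
      · unfold loL q
        simp only [Nat.mul_div_cancel _ (Nat.two_pow_pos _)]
        exact hfL x hx
      · exact Nat.mul_mod_left _ _
  -- e ⊆ R, f ⊆ R : impossible
  · exact absurd ⟨by rw [heR a hae, heR b hbe], by rw [heR a hae, hfR c hcf],
      by rw [heR a hae, hfR d hdf]⟩ hnag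
  -- e ⊆ R, f crossing : t3 with v = right elt of f
  · have hu'f : u' ∈ f := by rw [hfeq]; exact Sym2.mem_mk_left u' w'
    have hw'f : w' ∈ f := by rw [hfeq]; exact Sym2.mem_mk_right u' w'
    refine ⟨ℓ, hℓL, w', .t3, ⟨he, fun x hx => mkR (Or.inr hw'f) (heR x hx), ?_⟩,
      ⟨hf, hw'f, ?_, ⟨u', hu'f, mkL (Or.inr hw'f) hu'L⟩, mkR (Or.inr hw'f) hw'R⟩⟩
    · intro h; exact hdisj w' h hw'f
    · intro x hx hxw'
      rw [hfeq] at hx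
      rcases Sym2.mem_iff.mp hx with rfl | rfl
      · exact mkL (Or.inr hw'f) hu'L
      · exact absurd rfl hxw'
  -- e crossing, f ⊆ L : t4 with v = left elt of e
  · have hue : u ∈ e := by rw [heq]; exact Sym2.mem_mk_left u w
    have hwe : w ∈ e := by rw [heq]; exact Sym2.mem_mk_right u w
    refine ⟨ℓ, hℓL, u, .t4, ⟨he, hue, ?_, ⟨w, hwe, mkR (Or.inl hue) hwR⟩,
      mkL (Or.inl hue) huL⟩, ⟨hf, fun x hx => mkL (Or.inl hue) (hfL x hx),
      hdisj u hue⟩⟩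
    intro x hx hxu
    rw [heq] at hx
    rcases Sym2.mem_iff.mp hx with rfl | rfl
    · exact absurd rfl hxu
    · exact mkR (Or.inl hue) hwR
  -- e crossing, f ⊆ R : t5 with v = right elt of e
  · have hue : u ∈ e := by rw [heq]; exact Sym2.mem_mk_left u w
    have hwe : w ∈ e := by rw [heq]; exact Sym2.mem_mk_right u w
    refine ⟨ℓ, hℓL, w, .t5, ⟨he, hwe, ?_, ⟨u, hue, mkL (Or.inl hwe) huL⟩,
      mkR (Or.inl hwe) hwR⟩, ⟨hf, fun x hx => mkR (Or.inl hwe) (hfR x hx),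
      hdisj w hwe⟩⟩
    intro x hx hxw
    rw [heq] at hx
    rcases Sym2.mem_iff.mp hx with rfl | rfl
    · exact mkL (Or.inl hwe) huL
    · exact absurd rfl hxw
  -- e crossing, f crossing : t6 or t7
  · have hue : u ∈ e := by rw [heq]; exact Sym2.mem_mk_left u w
    have hwe : w ∈ e := by rw [heq]; exact Sym2.mem_mk_right u w
    have hu'f : u' ∈ f := by rw [hfeq]; exact Sym2.mem_mk_left u' w'
    have hw'f : w' ∈ f := by rw [hfeq]; exact Sym2.mem_mk_right u' w'
    by_cases hadj : G.Adj u w'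
    · -- t6 with v = right elt of f
      refine ⟨ℓ, hℓL, w', .t6, ⟨he, ?_, ⟨u, hue, mkL (Or.inr hw'f) huL⟩,
        ⟨w, hwe, mkR (Or.inr hw'f) hwR⟩, ?_, fun h => hdisj w' h hw'f⟩,
        ⟨hf, hw'f, ?_, ⟨u', hu'f, mkL (Or.inr hw'f) hu'L⟩, mkR (Or.inr hw'f) hw'R⟩⟩
      · intro x hx
        rw [heq] at hx
        rcases Sym2.mem_iff.mp hx with rfl | rfl
        · exact Or.inl (mkL (Or.inr hw'f) huL)
        · exact Or.inr (mkR (Or.inr hw'f) hwR)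
      · intro x hx hLx
        rw [heq] at hx
        rcases Sym2.mem_iff.mp hx with rfl | rfl
        · exact hadj.symm
        · exfalso
          unfold loL at hLx
          rw [hall w' (Or.inr hw'f)] at hLx
          omega
      · intro x hx hxw'
        rw [hfeq] at hx
        rcases Sym2.mem_iff.mp hx with rfl | rfl
        · exact mkL (Or.inr hw'f) hu'L
        · exact absurd rfl hxw'
    · -- t7 with v = left elt of e
      refine ⟨ℓ, hℓL, u, .t7, ⟨he, hue, ?_, ⟨w, hwe, mkR (Or.inl hue) hwR⟩,
        mkL (Or.inl hue) huL, trivial⟩,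
        ⟨hf, ?_, ⟨u', hu'f, mkL (Or.inl hue) hu'L⟩,
         ⟨w', hw'f, mkR (Or.inl hue) hw'R⟩, ?_, fun h => hdisj u hue h⟩⟩
      · intro x hx hxu
        rw [heq] at hx
        rcases Sym2.mem_iff.mp hx with rfl | rfl
        · exact absurd rfl hxu
        · exact mkR (Or.inl hue) hwR
      · intro x hx
        rw [hfeq] at hx
        rcases Sym2.mem_iff.mp hx with rfl | rfl
        · exact Or.inl (mkL (Or.inl hue) hu'L)
        · exact Or.inr (mkR (Or.inl hue) hw'R)
      · intro x hx hRx
        rw [hfeq] at hx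
        rcases Sym2.mem_iff.mp hx with rfl | rfl
        · exfalso
          unfold loR at hRx
          rw [hall u (Or.inl hue)] at hRx
          omega
        · exact hadj

end EdgeNonedgePartition

namespace EdgeNonedgePartition
variable {n : ℕ} {G : SimpleGraph (Fin n)}

lemma A_sub {ℓ : ℕ} {v : Fin n} (t : Tag) : A G ℓ v t ⊆ G.edgeSet := by
  cases t <;> exact fun e h => h.1

lemma B_sub {ℓ : ℕ} {v : Fin n} (t : Tag) : B G ℓ v t ⊆ F G := by
  cases t <;> exact fun f h => h.1

end EdgeNonedgePartition


open EdgeNonedgePartition in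
/-- For any graph `G` on `n ≥ 2` vertices, the set of disjoint edge/non-edge pairs can
be partitioned into `O(n log n)` products of a set of edges and a set of non-edges. -/
theorem edge_nonedge_partition :
    ∃ C : ℝ, ∀ n : ℕ, 2 ≤ n → ∀ G : SimpleGraph (Fin n),
      ∀ (nonEdges : Set (Sym2 (Fin n))),
        nonEdges = {s | ¬ s.IsDiag ∧ s ∉ G.edgeSet} →
      ∀ (D : Set (Sym2 (Fin n) × Sym2 (Fin n))),
        D = {p | p.1 ∈ G.edgeSet ∧ p.2 ∈ nonEdges ∧ ∀ v, v ∈ p.1 → ¬ v ∈ p.2} →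
      ∃ (k : ℕ) (C' : Fin k → Set (Sym2 (Fin n))) (C'' : Fin k → Set (Sym2 (Fin n))),
        (k : ℝ) ≤ C * (n : ℝ) * Real.logb 2 (n : ℝ) ∧
        (∀ i, C' i ⊆ G.edgeSet ∧ C'' i ⊆ nonEdges) ∧
        (⋃ i, C' i ×ˢ C'' i) = D ∧
        Pairwise (fun i j => Disjoint (C' i ×ˢ C'' i) (C' j ×ˢ C'' j)) := by
  classical
  refine ⟨16, ?_⟩
  intro n hn G nonEdges hF D hD
  have hFF : nonEdges = F G := hF
  set L : ℕ := Nat.log 2 (n-1) + 1 with hLdef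
  have hLn : ∀ x : Fin n, (x:ℕ) < 2^L := by
    intro x
    have h1 : n - 1 < 2^L := Nat.lt_pow_succ_log_self (by norm_num) (n-1)
    have h2 : (x:ℕ) < n := x.isLt
    omega
  set eqv : (Fin L × Fin n × Tag) ≃ Fin (Fintype.card (Fin L × Fin n × Tag)) :=
    Fintype.equivFin (Fin L × Fin n × Tag) with heqv
  refine ⟨Fintype.card (Fin L × Fin n × Tag),
    fun i => A G ((eqv.symm i).1 : ℕ) (eqv.symm i).2.1 (eqv.symm i).2.2,
    fun i => B G ((eqv.symm i).1 : ℕ) (eqv.symm i).2.1 (eqv.symm i).2.2,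
    ?_, ?_, ?_, ?_⟩
  · -- cardinality bound
    have hcard : Fintype.card (Fin L × Fin n × Tag) = L * (n * 8) := by
      have hTag : Fintype.card Tag = 8 := rfl
      simp [Fintype.card_prod, Fintype.card_fin, hTag]
    have hlogb1 : (1:ℝ) ≤ Real.logb 2 n := by
      rw [show (1:ℝ) = Real.logb 2 2 by simp]
      exact Real.logb_le_logb_of_le (by norm_num) (by norm_num) (by exact_mod_cast hn)
    have hlogb2 : ((Nat.log 2 (n-1) : ℕ) : ℝ) ≤ Real.logb 2 n := by
      have h1 : (2:ℕ)^(Nat.log 2 (n-1)) ≤ n - 1 := Nat.pow_log_le_self 2 (by omega)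
      have h2 : ((2:ℝ))^(Nat.log 2 (n-1)) ≤ (n:ℝ) := by
        have : (2:ℕ)^(Nat.log 2 (n-1)) ≤ n := le_trans h1 (by omega)
        exact_mod_cast this
      have h3 := Real.logb_le_logb_of_le (b := 2) (by norm_num) (by positivity) h2
      rw [Real.logb_pow] at h3
      simpa using h3
    have hL2 : (L:ℝ) ≤ 2 * Real.logb 2 n := by
      rw [hLdef]
      push_cast
      linarith
    rw [hcard]
    push_cast
    have hn8 : (0:ℝ) ≤ (n:ℝ) * 8 := by positivity
    nlinarith [mul_le_mul_of_nonneg_right hL2 hn8]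
  · -- subsets
    intro i
    exact ⟨A_sub _, by rw [hFF]; exact B_sub _⟩
  · -- union
    ext p
    simp only [Set.mem_iUnion, Set.mem_prod]
    constructor
    · rintro ⟨i, hpA, hpB⟩
      rw [hD]
      exact ⟨A_sub _ hpA, by rw [hFF]; exact B_sub _ hpB, valid hpA hpB⟩
    · intro hp
      rw [hD] at hp
      obtain ⟨hpe, hpf, hpdisj⟩ := hp
      have hpf' : p.2 ∈ F G := by rw [← hFF]; exact hpf
      obtain ⟨ℓ, hℓL, v, t, hA, hB⟩ := cover hLn hpe hpf' hpdisj
      refine ⟨eqv ⟨⟨ℓ, hℓL⟩, v, t⟩, ?_, ?_⟩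
      · rw [Equiv.symm_apply_apply]; exact hA
      · rw [Equiv.symm_apply_apply]; exact hB
  · -- pairwise disjoint
    intro i j hij
    rw [Set.disjoint_left]
    rintro p hpi hpj
    rw [Set.mem_prod] at hpi hpj
    obtain ⟨hll, hvv, htt⟩ := rect_unique hpi.1 hpi.2 hpj.1 hpj.2
    apply hij
    apply eqv.symm.injective.eq_iff.mp
    have h1 : (eqv.symm i).1 = (eqv.symm j).1 := Fin.ext hll
    exact Prod.ext h1 (Prod.ext hvv htt)
end
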